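/- Let x, y, z be permutations of a 6-element set (Equiv.Perm (Fin 6)), each of which is a product of three pairwise disjoint transpositions (cycle type 2³, a 'triple transposition'). Then the subgroup generated by x, y and z is solvable. (This is the Table 1 entry for G0 ≅ A₆ and x a triple transposition, restricted to conjugates inside S₆.) -/

import Mathlib

set_option maxRecDepth 100000
open Equiv Equiv.Perm Subgroup
open scoped commutatorElement

namespace TTT

abbrev P := Equiv.Perm (Fin 6)
abbrev Cd := List Nat

def compL (u v : Cd) : Cd := v.map (fun n => u.getD n 0)
def enc (a : P) : Cd := List.ofFn (fun i : Fin 6 => ((a i : Fin 6) : ℕ))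

theorem enc_length (a : P) : (enc a).length = 6 := by simp [enc]

theorem enc_getD (a : P) (i : Fin 6) : (enc a).getD (i : ℕ) 0 = ((a i : Fin 6) : ℕ) := by
  have h : (i : ℕ) < (enc a).length := by rw [enc_length]; exact i.isLt
  rw [List.getD_eq_getElem _ _ h]
  simp [enc, List.getElem_ofFn]
  fin_cases i <;> rfl

theorem enc_mem_lt (a : P) : ∀ n ∈ enc a, n < 6 := by
  intro n hn
  simp only [enc, List.mem_ofFn] at hn
  obtain ⟨i, rfl⟩ := hn
  exact (a i).isLt

theorem enc_mul (a b : P) : enc (a * b) = compL (enc a) (enc b) := by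
  unfold compL enc
  rw [List.map_ofFn]
  refine congrArg _ (funext fun i => ?_)
  simp only [Function.comp_apply, Equiv.Perm.mul_apply]
  exact (enc_getD a (b i)).symm

theorem enc_inj {a b : P} (h : enc a = enc b) : a = b := by
  refine Equiv.ext fun i => ?_
  have := congrArg (fun l => l.getD (i : ℕ) 0) h
  simp only [enc_getD] at this
  exact Fin.ext this

theorem compL_length (u v : Cd) : (compL u v).length = v.length := by simp [compL]

theorem cancel_right (g : P) {A B : Cd} (hA : A.length = 6) (hB : B.length = 6)
    (h : compL A (enc g) = compL B (enc g)) : A = B := by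
  refine List.ext_getElem (hA.trans hB.symm) fun i h1 h2 => ?_
  have hi6 : i < 6 := hA ▸ h1
  set j : Fin 6 := g⁻¹ ⟨i, hi6⟩ with hj
  have hgj : ((g j : Fin 6) : ℕ) = i := by simp [hj]
  have h' := congrArg (fun l => l[(j : ℕ)]?) h
  simp only [compL, List.getElem?_map] at h'
  have hjb : (j : ℕ) < (enc g).length := by rw [enc_length]; exact j.isLt
  rw [List.getElem?_eq_getElem hjb] at h'
  simp only [Option.map_some] at h'
  have hval : (enc g)[(j : ℕ)] = ((g j : Fin 6) : ℕ) := by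
    have := enc_getD g j
    rwa [List.getD_eq_getElem _ _ hjb] at this
  rw [hval, hgj] at h'
  have h'' : A.getD i 0 = B.getD i 0 := Option.some.inj h'
  rwa [List.getD_eq_getElem _ _ h1, List.getD_eq_getElem _ _ h2] at h''

theorem cancel_left (s : P) {A B : Cd} (hA : ∀ n ∈ A, n < 6) (hB : ∀ n ∈ B, n < 6)
    (h : compL (enc s) A = compL (enc s) B) : A = B := by
  have hlen : A.length = B.length := by
    have := congrArg List.length h
    simpa [compL] using this
  refine List.ext_getElem hlen fun i h1 h2 => ?_
  have h' := congrArg (fun l => l[i]?) h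
  simp only [compL, List.getElem?_map] at h'
  rw [List.getElem?_eq_getElem h1, List.getElem?_eq_getElem h2] at h'
  simp only [Option.map_some] at h'
  have hfe : (enc s).getD A[i] 0 = (enc s).getD B[i] 0 := Option.some.inj h'
  have ha6 : A[i] < 6 := hA _ (List.getElem_mem h1)
  have hb6 : B[i] < 6 := hB _ (List.getElem_mem h2)
  have ea := enc_getD s ⟨A[i], ha6⟩
  have eb := enc_getD s ⟨B[i], hb6⟩
  simp only at ea eb
  rw [ea, eb] at hfe
  have := s.injective (Fin.ext hfe : s ⟨A[i], ha6⟩ = s ⟨B[i], hb6⟩)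
  simpa [Fin.ext_iff] using this

section GroupLemmas

variable {G : Type*} [Group G]

theorem conj_closure_le (s : G) (T : Set G) (hb : ∀ t ∈ T, s * t * s⁻¹ ∈ Subgroup.closure T) :
    ∀ a ∈ Subgroup.closure T, s * a * s⁻¹ ∈ Subgroup.closure T := by
  intro a ha
  induction ha using Subgroup.closure_induction with
  | mem t ht => exact hb t ht
  | one => simpa using one_mem _
  | mul u v hu hv hiu hiv =>
      have : s * (u * v) * s⁻¹ = (s * u * s⁻¹) * (s * v * s⁻¹) := by group
      rw [this]; exact mul_mem hiu hiv
  | inv u hu hiu =>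
      have : s * u⁻¹ * s⁻¹ = (s * u * s⁻¹)⁻¹ := by group
      rw [this]; exact inv_mem hiu

theorem comm_closure_le (S : Set G) (H : Subgroup G)
    (hcomm : ∀ s ∈ S, ∀ t ∈ S, ⁅s, t⁆ ∈ H)
    (hconj : ∀ s ∈ S, ∀ a ∈ H, s * a * s⁻¹ ∈ H ∧ s⁻¹ * a * s ∈ H) :
    ⁅Subgroup.closure S, Subgroup.closure S⁆ ≤ H := by
  have hN : ∀ g ∈ Subgroup.closure S, ∀ a ∈ H, g * a * g⁻¹ ∈ H ∧ g⁻¹ * a * g ∈ H := by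
    intro g hg
    induction hg using Subgroup.closure_induction with
    | mem t ht => exact hconj t ht
    | one => intro a ha; constructor <;> simpa using ha
    | mul u v hu hv hiu hiv =>
        intro a ha
        constructor
        · have : u * v * a * (u * v)⁻¹ = u * (v * a * v⁻¹) * u⁻¹ := by group
          rw [this]; exact (hiu _ ((hiv a ha).1)).1
        · have : (u * v)⁻¹ * a * (u * v) = v⁻¹ * (u⁻¹ * a * u) * v := by group
          rw [this]; exact (hiv _ ((hiu a ha).2)).2
    | inv u hu hiu =>
        intro a ha
        simp only [inv_inv]
        exact ⟨(hiu a ha).2, (hiu a ha).1⟩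
  refine Subgroup.commutator_le.mpr ?_
  intro g hg
  induction hg using Subgroup.closure_induction with
  | mem s hs =>
      intro h hh
      induction hh using Subgroup.closure_induction with
      | mem t ht => exact hcomm s hs t ht
      | one => simpa using one_mem _
      | mul u v hu hv hiu hiv =>
          have : ⁅s, u * v⁆ = ⁅s, u⁆ * (u * ⁅s, v⁆ * u⁻¹) := by group
          rw [this]
          exact mul_mem hiu ((hN u hu _ hiv).1)
      | inv u hu hiu =>
          have : ⁅s, u⁻¹⁆ = u⁻¹ * ⁅s, u⁆⁻¹ * u := by group
          rw [this]
          exact (hN u hu _ (inv_mem hiu)).2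
  | one => intro h hh; simpa using one_mem _
  | mul u v hu hv hiu hiv =>
      intro h hh
      have : ⁅u * v, h⁆ = (u * ⁅v, h⁆ * u⁻¹) * ⁅u, h⁆ := by group
      rw [this]
      exact mul_mem ((hN u hu _ (hiv h hh)).1) (hiu h hh)
  | inv u hu hiu =>
      intro h hh
      have : ⁅u⁻¹, h⁆ = u⁻¹ * ⁅u, h⁆⁻¹ * u := by group
      rw [this]
      exact (hN u hu _ (inv_mem (hiu h hh))).2

theorem solv_step {A B : Subgroup G} (h : ⁅A, A⁆ ≤ B) (hB : IsSolvable B) : IsSolvable A := by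
  obtain ⟨n, hn⟩ := hB.solvable
  have key : ∀ m, Subgroup.map A.subtype (derivedSeries A (m + 1)) ≤
      Subgroup.map B.subtype (derivedSeries B m) := by
    intro m
    induction m with
    | zero =>
        have htop : Subgroup.map A.subtype (derivedSeries (↥A) 0) = A := by
          rw [derivedSeries_zero, ← MonoidHom.range_eq_map, Subgroup.range_subtype]
        have htopB : Subgroup.map B.subtype (derivedSeries (↥B) 0) = B := by
          rw [derivedSeries_zero, ← MonoidHom.range_eq_map, Subgroup.range_subtype]
        have h1 : Subgroup.map A.subtype (derivedSeries (↥A) 1) = ⁅A, A⁆ := by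
          rw [derivedSeries_succ, Subgroup.map_commutator, htop]
        rw [h1, htopB]
        exact h
    | succ m ih =>
        rw [derivedSeries_succ (G := A), Subgroup.map_commutator, derivedSeries_succ (G := B)]
        exact Subgroup.commutator_le_map_commutator ih ih
  refine ⟨⟨n + 1, ?_⟩⟩
  have := key n
  rw [hn] at this
  simp only [Subgroup.map_bot] at this
  have hb := le_bot_iff.mp this
  rwa [Subgroup.map_eq_bot_iff_of_injective _ A.subtype_injective] at hb

end GroupLemmas

/-- Certificate checks: `D1`/`D2` witness the derived series of `⟨x,y,z⟩`. -/
abbrev checks (sx sy sz : Cd) (D1 D2 : List Cd) : Prop :=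
  (∀ l ∈ D1, l.length = 6 ∧ ∀ n ∈ l, n < 6) ∧
  (∀ l ∈ D2, l.length = 6 ∧ ∀ n ∈ l, n < 6) ∧
  (∀ s ∈ [sx, sy, sz], ∀ t ∈ [sx, sy, sz],
    ∃ c ∈ D1, compL s t = compL (compL c t) s) ∧
  (∀ s ∈ [sx, sy, sz], ∀ t ∈ D1,
    (∃ b ∈ D1, compL s t = compL b s) ∧ (∃ b ∈ D1, compL t s = compL s b)) ∧
  (∀ c ∈ D1, ∀ d ∈ D1, ∃ u ∈ D2, compL c d = compL (compL u d) c) ∧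
  (∀ c ∈ D1, ∀ a ∈ D2,
    (∃ b ∈ D2, compL c a = compL b c) ∧ (∃ b ∈ D2, compL a c = compL c b)) ∧
  (∀ a ∈ D2, ∀ b ∈ D2, compL a b = compL b a)

theorem wit_comm {g h : P} {T : List Cd} (hl : ∀ l ∈ T, l.length = 6)
    (hw : ∃ c ∈ T, compL (enc g) (enc h) = compL (compL c (enc h)) (enc g)) :
    enc ⁅g, h⁆ ∈ T := by
  obtain ⟨c, hcT, heq⟩ := hw
  have hid : ⁅g, h⁆ * h * g = g * h := by group
  have h2 : compL (compL (enc ⁅g, h⁆) (enc h)) (enc g) = compL (compL c (enc h)) (enc g) := by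
    rw [← enc_mul, ← enc_mul, hid, enc_mul, heq]
  have h3 : compL (enc ⁅g, h⁆) (enc h) = compL c (enc h) :=
    cancel_right g (by rw [compL_length, enc_length]) (by rw [compL_length, enc_length]) h2
  have h4 : enc ⁅g, h⁆ = c :=
    cancel_right h (enc_length _) (hl c hcT) h3
  rwa [h4]

theorem wit_conj {s t : P} {T : List Cd} (hl : ∀ l ∈ T, l.length = 6)
    (hw : ∃ b ∈ T, compL (enc s) (enc t) = compL b (enc s)) :
    enc (s * t * s⁻¹) ∈ T := by
  obtain ⟨b, hbT, heq⟩ := hw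
  have hid : (s * t * s⁻¹) * s = s * t := by group
  have h2 : compL (enc (s * t * s⁻¹)) (enc s) = compL b (enc s) := by
    rw [← enc_mul, hid, enc_mul, heq]
  have h4 : enc (s * t * s⁻¹) = b := cancel_right s (enc_length _) (hl b hbT) h2
  rwa [h4]

theorem wit_conj' {s t : P} {T : List Cd} (hlt : ∀ l ∈ T, ∀ n ∈ l, n < 6)
    (hw : ∃ b ∈ T, compL (enc t) (enc s) = compL (enc s) b) :
    enc (s⁻¹ * t * s) ∈ T := by
  obtain ⟨b, hbT, heq⟩ := hw
  have hid : s * (s⁻¹ * t * s) = t * s := by group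
  have h2 : compL (enc s) (enc (s⁻¹ * t * s)) = compL (enc s) b := by
    rw [← enc_mul, hid, enc_mul, heq]
  have h4 : enc (s⁻¹ * t * s) = b := cancel_left s (enc_mem_lt _) (hlt b hbT) h2
  rwa [h4]

theorem solvable_of_checks (x y z : P) (D1 D2 : List Cd)
    (h : checks (enc x) (enc y) (enc z) D1 D2) :
    IsSolvable (Subgroup.closure ({x, y, z} : Set P)) := by
  obtain ⟨hl1, hl2, hA, hD, hB, hC, hE⟩ := h
  have hl1' : ∀ l ∈ D1, l.length = 6 := fun l hl => (hl1 l hl).1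
  have hl1'' : ∀ l ∈ D1, ∀ n ∈ l, n < 6 := fun l hl => (hl1 l hl).2
  have hl2' : ∀ l ∈ D2, l.length = 6 := fun l hl => (hl2 l hl).1
  have hl2'' : ∀ l ∈ D2, ∀ n ∈ l, n < 6 := fun l hl => (hl2 l hl).2
  set S1 : Set P := {g : P | enc g ∈ D1} with hS1
  set S2 : Set P := {g : P | enc g ∈ D2} with hS2
  set K2 : Subgroup P := Subgroup.closure S2 with hK2
  set K1 : Subgroup P := Subgroup.closure S1 with hK1
  set K : Subgroup P := Subgroup.closure ({x, y, z} : Set P) with hK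
  -- membership of the three generators' codes in the generator list
  have hmem : ∀ s ∈ ({x, y, z} : Set P), enc s ∈ [enc x, enc y, enc z] := by
    intro s hs
    rcases hs with rfl | rfl | rfl <;> simp
  -- level 2 : K2 is abelian
  have h3 : ⁅K2, K2⁆ ≤ (⊥ : Subgroup P) := by
    refine comm_closure_le S2 ⊥ ?_ ?_
    · intro g hg t ht
      have := hE (enc g) hg (enc t) ht
      have hcomm : g * t = t * g := enc_inj (by rw [enc_mul, enc_mul, this])
      have : ⁅g, t⁆ = 1 := by
        rw [commutatorElement_def, hcomm]; group
      simp [this]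
    · intro s hs a ha
      simp only [Subgroup.mem_bot] at ha
      subst ha
      simp
  -- level 1 : commutators of K1 land in K2, K2 stable under conj by S1
  have h2 : ⁅K1, K1⁆ ≤ K2 := by
    refine comm_closure_le S1 K2 ?_ ?_
    · intro g hg t ht
      exact Subgroup.subset_closure (wit_comm hl2' (hB (enc g) hg (enc t) ht))
    · intro s hs a ha
      constructor
      · exact conj_closure_le s S2
          (fun t ht => Subgroup.subset_closure (wit_conj hl2' ((hC (enc s) hs (enc t) ht).1)))
          a ha
      · have := conj_closure_le s⁻¹ S2
          (fun t ht => by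
            have hb := (hC (enc s) hs (enc t) ht).2
            have hm2 : s⁻¹ * t * s ∈ S2 := wit_conj' hl2'' hb
            have hm3 : s⁻¹ * t * s⁻¹⁻¹ ∈ S2 := by simpa using hm2
            exact Subgroup.subset_closure hm3)
          a ha
        simpa using this
  -- level 0 : commutators of K land in K1, K1 stable under conj by generators
  have h1 : ⁅K, K⁆ ≤ K1 := by
    refine comm_closure_le _ K1 ?_ ?_
    · intro g hg t ht
      exact Subgroup.subset_closure (wit_comm hl1' (hA (enc g) (hmem g hg) (enc t) (hmem t ht)))
    · intro s hs a ha
      constructor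
      · exact conj_closure_le s S1
          (fun t ht => Subgroup.subset_closure
            (wit_conj hl1' ((hD (enc s) (hmem s hs) (enc t) ht).1)))
          a ha
      · have := conj_closure_le s⁻¹ S1
          (fun t ht => by
            have hb := (hD (enc s) (hmem s hs) (enc t) ht).2
            have hm2 : s⁻¹ * t * s ∈ S1 := wit_conj' hl1'' hb
            have hm3 : s⁻¹ * t * s⁻¹⁻¹ ∈ S1 := by simpa using hm2
            exact Subgroup.subset_closure hm3)
          a ha
        simpa using this
  have hbot : IsSolvable (⊥ : Subgroup P) := by
    haveI : Subsingleton ((⊥ : Subgroup P) : Type) := by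
      constructor
      rintro ⟨a, ha⟩ ⟨b, hb⟩
      simp only [Subgroup.mem_bot] at ha hb
      subst ha; subst hb; rfl
    exact (inferInstance : Group.IsSolvable ((⊥ : Subgroup P) : Type))
  exact solv_step h1 (solv_step h2 (solv_step h3 hbot))


def m (a b c d e f : Fin 6) : P := Equiv.swap a b * Equiv.swap c d * Equiv.swap e f

def L15 : List P :=
  [ m 0 1 2 3 4 5, m 0 1 2 4 3 5, m 0 1 2 5 3 4,
    m 0 2 1 3 4 5, m 0 2 1 4 3 5, m 0 2 1 5 3 4,
    m 0 3 1 2 4 5, m 0 3 1 4 2 5, m 0 3 1 5 2 4,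
    m 0 4 1 2 3 5, m 0 4 1 3 2 5, m 0 4 1 5 2 3,
    m 0 5 1 2 3 4, m 0 5 1 3 2 4, m 0 5 1 4 2 3 ]

def L15C : List Cd := L15.map enc

def x0 : P := m 0 1 2 3 4 5

theorem key_perm : ∀ w : P, w * w = 1 → (∀ i, w i ≠ i) → w ∈ L15 := by decide

theorem ct_sq {w : P} (h : w.cycleType = {2, 2, 2}) : w * w = 1 := by
  have hlcm := Equiv.Perm.lcm_cycleType w
  rw [h] at hlcm
  have hord : orderOf w = 2 := by rw [← hlcm]; decide
  have hp := pow_orderOf_eq_one w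
  rw [hord, pow_two] at hp
  exact hp

theorem ct_fpf {w : P} (h : w.cycleType = {2, 2, 2}) : ∀ i, w i ≠ i := by
  have hs := Equiv.Perm.sum_cycleType w
  rw [h] at hs
  have hcard : w.support.card = 6 := by rw [← hs]; decide
  have huniv : w.support = Finset.univ :=
    Finset.eq_univ_of_card _ (by rw [hcard]; rfl)
  intro i
  exact Equiv.Perm.mem_support.mp (huniv ▸ Finset.mem_univ i)

theorem x0_ct : x0.cycleType = {2, 2, 2} := by
  have d1 : (Equiv.swap (0 : Fin 6) 1).Disjoint (Equiv.swap 2 3) :=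
    (by decide : ∀ i : Fin 6, Equiv.swap (0 : Fin 6) 1 i = i ∨ Equiv.swap (2 : Fin 6) 3 i = i)
  have d2 : (Equiv.swap (0 : Fin 6) 1 * Equiv.swap 2 3).Disjoint (Equiv.swap 4 5) :=
    (by decide : ∀ i : Fin 6,
      ((Equiv.swap (0 : Fin 6) 1 * Equiv.swap 2 3 : P) : Fin 6 → Fin 6) i = i ∨
        Equiv.swap (4 : Fin 6) 5 i = i)
  have hx0 : x0 = Equiv.swap 0 1 * Equiv.swap 2 3 * Equiv.swap 4 5 := rfl
  rw [hx0, d2.cycleType_mul, d1.cycleType_mul,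
    (isCycle_swap (by decide)).cycleType, (isCycle_swap (by decide)).cycleType,
    (isCycle_swap (by decide)).cycleType,
    card_support_swap (by decide), card_support_swap (by decide),
    card_support_swap (by decide)]
  decide

def x0c : Cd := [1,0,3,2,5,4]
def c0 : Cd := [1,0,3,2,5,4]
def c1 : Cd := [1,0,4,5,2,3]
def c2 : Cd := [1,0,5,4,3,2]
def c3 : Cd := [2,3,0,1,5,4]
def c4 : Cd := [2,4,0,5,1,3]
def c5 : Cd := [2,5,0,4,3,1]
def c6 : Cd := [3,2,1,0,5,4]
def c7 : Cd := [3,4,5,0,1,2]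
def c8 : Cd := [3,5,4,0,2,1]
def c9 : Cd := [4,2,1,5,0,3]
def c10 : Cd := [4,3,5,1,0,2]
def c11 : Cd := [4,5,3,2,0,1]
def c12 : Cd := [5,2,1,4,3,0]
def c13 : Cd := [5,3,4,1,2,0]
def c14 : Cd := [5,4,3,2,1,0]

def dat0 : List (Cd × List Cd × List Cd) := [
  ([1,0,3,2,5,4], [[0,1,2,3,4,5]], [[0,1,2,3,4,5]]),
  ([1,0,4,5,2,3], [[0,1,2,3,4,5]], [[0,1,2,3,4,5]]),
  ([1,0,5,4,3,2], [[0,1,2,3,4,5]], [[0,1,2,3,4,5]]),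
  ([2,3,0,1,5,4], [[0,1,2,3,4,5]], [[0,1,2,3,4,5]]),
  ([2,4,0,5,1,3], [[0,1,2,3,4,5], [3,5,1,4,0,2], [4,2,5,0,3,1]], [[0,1,2,3,4,5]]),
  ([2,5,0,4,3,1], [[0,1,2,3,4,5], [3,4,1,5,2,0], [5,2,4,0,1,3]], [[0,1,2,3,4,5]]),
  ([3,2,1,0,5,4], [[0,1,2,3,4,5]], [[0,1,2,3,4,5]]),
  ([3,4,5,0,1,2], [[0,1,2,3,4,5], [2,5,4,1,0,3], [4,3,0,5,2,1]], [[0,1,2,3,4,5]]),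
  ([3,5,4,0,2,1], [[0,1,2,3,4,5], [2,4,5,1,3,0], [5,3,0,4,1,2]], [[0,1,2,3,4,5]]),
  ([4,2,1,5,0,3], [[0,1,2,3,4,5], [2,4,5,1,3,0], [5,3,0,4,1,2]], [[0,1,2,3,4,5]]),
  ([4,3,5,1,0,2], [[0,1,2,3,4,5], [3,4,1,5,2,0], [5,2,4,0,1,3]], [[0,1,2,3,4,5]]),
  ([4,5,3,2,0,1], [[0,1,2,3,4,5]], [[0,1,2,3,4,5]]),
  ([5,2,1,4,3,0], [[0,1,2,3,4,5], [2,5,4,1,0,3], [4,3,0,5,2,1]], [[0,1,2,3,4,5]]),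
  ([5,3,4,1,2,0], [[0,1,2,3,4,5], [3,5,1,4,0,2], [4,2,5,0,3,1]], [[0,1,2,3,4,5]]),
  ([5,4,3,2,1,0], [[0,1,2,3,4,5]], [[0,1,2,3,4,5]])]

theorem tbl0 : ∀ cz ∈ L15C, ∃ d ∈ dat0, d.1 = cz ∧ checks x0c c0 cz d.2.1 d.2.2 := by decide +kernel

def dat1 : List (Cd × List Cd × List Cd) := [
  ([1,0,3,2,5,4], [[0,1,2,3,4,5]], [[0,1,2,3,4,5]]),
  ([1,0,4,5,2,3], [[0,1,2,3,4,5]], [[0,1,2,3,4,5]]),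
  ([1,0,5,4,3,2], [[0,1,2,3,4,5]], [[0,1,2,3,4,5]]),
  ([2,3,0,1,5,4], [[0,1,2,3,4,5], [3,2,5,4,0,1], [4,5,1,0,3,2]], [[0,1,2,3,4,5]]),
  ([2,4,0,5,1,3], [[0,1,2,3,4,5], [3,5,1,4,0,2], [4,2,5,0,3,1]], [[0,1,2,3,4,5]]),
  ([2,5,0,4,3,1], [[0,1,2,3,4,5], [2,5,3,0,1,4], [2,5,4,1,0,3], [3,4,0,2,5,1], [3,4,1,5,2,0], [4,3,0,5,2,1], [4,3,1,2,5,0], [5,2,3,1,0,4], [5,2,4,0,1,3]], [[0,1,2,3,4,5], [0,1,5,4,3,2], [1,0,2,4,3,5], [1,0,5,3,4,2]]),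
  ([3,2,1,0,5,4], [[0,1,2,3,4,5], [2,3,5,4,1,0], [5,4,0,1,3,2]], [[0,1,2,3,4,5]]),
  ([3,4,5,0,1,2], [[0,1,2,3,4,5], [2,5,3,0,1,4], [2,5,4,1,0,3], [3,4,0,2,5,1], [3,4,1,5,2,0], [4,3,0,5,2,1], [4,3,1,2,5,0], [5,2,3,1,0,4], [5,2,4,0,1,3]], [[0,1,2,3,4,5], [0,1,5,4,3,2], [1,0,2,4,3,5], [1,0,5,3,4,2]]),
  ([3,5,4,0,2,1], [[0,1,2,3,4,5], [2,4,5,1,3,0], [5,3,0,4,1,2]], [[0,1,2,3,4,5]]),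
  ([4,2,1,5,0,3], [[0,1,2,3,4,5], [2,4,5,1,3,0], [5,3,0,4,1,2]], [[0,1,2,3,4,5]]),
  ([4,3,5,1,0,2], [[0,1,2,3,4,5], [2,5,3,0,1,4], [2,5,4,1,0,3], [3,4,0,2,5,1], [3,4,1,5,2,0], [4,3,0,5,2,1], [4,3,1,2,5,0], [5,2,3,1,0,4], [5,2,4,0,1,3]], [[0,1,2,3,4,5], [0,1,5,4,3,2], [1,0,2,4,3,5], [1,0,5,3,4,2]]),
  ([4,5,3,2,0,1], [[0,1,2,3,4,5], [2,3,5,4,1,0], [5,4,0,1,3,2]], [[0,1,2,3,4,5]]),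
  ([5,2,1,4,3,0], [[0,1,2,3,4,5], [2,5,3,0,1,4], [2,5,4,1,0,3], [3,4,0,2,5,1], [3,4,1,5,2,0], [4,3,0,5,2,1], [4,3,1,2,5,0], [5,2,3,1,0,4], [5,2,4,0,1,3]], [[0,1,2,3,4,5], [0,1,5,4,3,2], [1,0,2,4,3,5], [1,0,5,3,4,2]]),
  ([5,3,4,1,2,0], [[0,1,2,3,4,5], [3,5,1,4,0,2], [4,2,5,0,3,1]], [[0,1,2,3,4,5]]),
  ([5,4,3,2,1,0], [[0,1,2,3,4,5], [3,2,5,4,0,1], [4,5,1,0,3,2]], [[0,1,2,3,4,5]])]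

theorem tbl1 : ∀ cz ∈ L15C, ∃ d ∈ dat1, d.1 = cz ∧ checks x0c c1 cz d.2.1 d.2.2 := by decide +kernel

def dat2 : List (Cd × List Cd × List Cd) := [
  ([1,0,3,2,5,4], [[0,1,2,3,4,5]], [[0,1,2,3,4,5]]),
  ([1,0,4,5,2,3], [[0,1,2,3,4,5]], [[0,1,2,3,4,5]]),
  ([1,0,5,4,3,2], [[0,1,2,3,4,5]], [[0,1,2,3,4,5]]),
  ([2,3,0,1,5,4], [[0,1,2,3,4,5], [3,2,4,5,1,0], [5,4,1,0,2,3]], [[0,1,2,3,4,5]]),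
  ([2,4,0,5,1,3], [[0,1,2,3,4,5], [2,4,3,0,5,1], [2,4,5,1,3,0], [3,5,0,2,1,4], [3,5,1,4,0,2], [4,2,3,1,5,0], [4,2,5,0,3,1], [5,3,0,4,1,2], [5,3,1,2,0,4]], [[0,1,2,3,4,5], [0,1,4,5,2,3], [1,0,2,5,4,3], [1,0,4,3,2,5]]),
  ([2,5,0,4,3,1], [[0,1,2,3,4,5], [3,4,1,5,2,0], [5,2,4,0,1,3]], [[0,1,2,3,4,5]]),
  ([3,2,1,0,5,4], [[0,1,2,3,4,5], [2,3,4,5,0,1], [4,5,0,1,2,3]], [[0,1,2,3,4,5]]),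
  ([3,4,5,0,1,2], [[0,1,2,3,4,5], [2,5,4,1,0,3], [4,3,0,5,2,1]], [[0,1,2,3,4,5]]),
  ([3,5,4,0,2,1], [[0,1,2,3,4,5], [2,4,3,0,5,1], [2,4,5,1,3,0], [3,5,0,2,1,4], [3,5,1,4,0,2], [4,2,3,1,5,0], [4,2,5,0,3,1], [5,3,0,4,1,2], [5,3,1,2,0,4]], [[0,1,2,3,4,5], [0,1,4,5,2,3], [1,0,2,5,4,3], [1,0,4,3,2,5]]),
  ([4,2,1,5,0,3], [[0,1,2,3,4,5], [2,4,3,0,5,1], [2,4,5,1,3,0], [3,5,0,2,1,4], [3,5,1,4,0,2], [4,2,3,1,5,0], [4,2,5,0,3,1], [5,3,0,4,1,2], [5,3,1,2,0,4]], [[0,1,2,3,4,5], [0,1,4,5,2,3], [1,0,2,5,4,3], [1,0,4,3,2,5]]),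
  ([4,3,5,1,0,2], [[0,1,2,3,4,5], [3,4,1,5,2,0], [5,2,4,0,1,3]], [[0,1,2,3,4,5]]),
  ([4,5,3,2,0,1], [[0,1,2,3,4,5], [3,2,4,5,1,0], [5,4,1,0,2,3]], [[0,1,2,3,4,5]]),
  ([5,2,1,4,3,0], [[0,1,2,3,4,5], [2,5,4,1,0,3], [4,3,0,5,2,1]], [[0,1,2,3,4,5]]),
  ([5,3,4,1,2,0], [[0,1,2,3,4,5], [2,4,3,0,5,1], [2,4,5,1,3,0], [3,5,0,2,1,4], [3,5,1,4,0,2], [4,2,3,1,5,0], [4,2,5,0,3,1], [5,3,0,4,1,2], [5,3,1,2,0,4]], [[0,1,2,3,4,5], [0,1,4,5,2,3], [1,0,2,5,4,3], [1,0,4,3,2,5]]),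
  ([5,4,3,2,1,0], [[0,1,2,3,4,5], [2,3,4,5,0,1], [4,5,0,1,2,3]], [[0,1,2,3,4,5]])]

theorem tbl2 : ∀ cz ∈ L15C, ∃ d ∈ dat2, d.1 = cz ∧ checks x0c c2 cz d.2.1 d.2.2 := by decide +kernel

def dat3 : List (Cd × List Cd × List Cd) := [
  ([1,0,3,2,5,4], [[0,1,2,3,4,5]], [[0,1,2,3,4,5]]),
  ([1,0,4,5,2,3], [[0,1,2,3,4,5], [3,2,5,4,0,1], [4,5,1,0,3,2]], [[0,1,2,3,4,5]]),
  ([1,0,5,4,3,2], [[0,1,2,3,4,5], [3,2,4,5,1,0], [5,4,1,0,2,3]], [[0,1,2,3,4,5]]),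
  ([2,3,0,1,5,4], [[0,1,2,3,4,5]], [[0,1,2,3,4,5]]),
  ([2,4,0,5,1,3], [[0,1,2,3,4,5], [3,5,1,4,0,2], [4,2,5,0,3,1]], [[0,1,2,3,4,5]]),
  ([2,5,0,4,3,1], [[0,1,2,3,4,5], [3,4,1,5,2,0], [5,2,4,0,1,3]], [[0,1,2,3,4,5]]),
  ([3,2,1,0,5,4], [[0,1,2,3,4,5]], [[0,1,2,3,4,5]]),
  ([3,4,5,0,1,2], [[0,1,2,3,4,5], [1,4,5,2,0,3], [1,5,4,2,3,0], [2,4,5,1,3,0], [2,5,4,1,0,3], [4,0,3,5,1,2], [4,3,0,5,2,1], [5,0,3,4,2,1], [5,3,0,4,1,2]], [[0,1,2,3,4,5], [0,2,1,3,5,4], [3,1,2,0,5,4], [3,2,1,0,4,5]]),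
  ([3,5,4,0,2,1], [[0,1,2,3,4,5], [1,4,5,2,0,3], [1,5,4,2,3,0], [2,4,5,1,3,0], [2,5,4,1,0,3], [4,0,3,5,1,2], [4,3,0,5,2,1], [5,0,3,4,2,1], [5,3,0,4,1,2]], [[0,1,2,3,4,5], [0,2,1,3,5,4], [3,1,2,0,5,4], [3,2,1,0,4,5]]),
  ([4,2,1,5,0,3], [[0,1,2,3,4,5], [1,4,5,2,0,3], [1,5,4,2,3,0], [2,4,5,1,3,0], [2,5,4,1,0,3], [4,0,3,5,1,2], [4,3,0,5,2,1], [5,0,3,4,2,1], [5,3,0,4,1,2]], [[0,1,2,3,4,5], [0,2,1,3,5,4], [3,1,2,0,5,4], [3,2,1,0,4,5]]),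
  ([4,3,5,1,0,2], [[0,1,2,3,4,5], [3,4,1,5,2,0], [5,2,4,0,1,3]], [[0,1,2,3,4,5]]),
  ([4,5,3,2,0,1], [[0,1,2,3,4,5], [3,2,4,5,1,0], [5,4,1,0,2,3]], [[0,1,2,3,4,5]]),
  ([5,2,1,4,3,0], [[0,1,2,3,4,5], [1,4,5,2,0,3], [1,5,4,2,3,0], [2,4,5,1,3,0], [2,5,4,1,0,3], [4,0,3,5,1,2], [4,3,0,5,2,1], [5,0,3,4,2,1], [5,3,0,4,1,2]], [[0,1,2,3,4,5], [0,2,1,3,5,4], [3,1,2,0,5,4], [3,2,1,0,4,5]]),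
  ([5,3,4,1,2,0], [[0,1,2,3,4,5], [3,5,1,4,0,2], [4,2,5,0,3,1]], [[0,1,2,3,4,5]]),
  ([5,4,3,2,1,0], [[0,1,2,3,4,5], [3,2,5,4,0,1], [4,5,1,0,3,2]], [[0,1,2,3,4,5]])]

theorem tbl3 : ∀ cz ∈ L15C, ∃ d ∈ dat3, d.1 = cz ∧ checks x0c c3 cz d.2.1 d.2.2 := by decide +kernel

def dat4 : List (Cd × List Cd × List Cd) := [
  ([1,0,3,2,5,4], [[0,1,2,3,4,5], [3,5,1,4,0,2], [4,2,5,0,3,1]], [[0,1,2,3,4,5]]),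
  ([1,0,4,5,2,3], [[0,1,2,3,4,5], [3,5,1,4,0,2], [4,2,5,0,3,1]], [[0,1,2,3,4,5]]),
  ([1,0,5,4,3,2], [[0,1,2,3,4,5], [2,4,3,0,5,1], [2,4,5,1,3,0], [3,5,0,2,1,4], [3,5,1,4,0,2], [4,2,3,1,5,0], [4,2,5,0,3,1], [5,3,0,4,1,2], [5,3,1,2,0,4]], [[0,1,2,3,4,5], [0,1,4,5,2,3], [1,0,2,5,4,3], [1,0,4,3,2,5]]),
  ([2,3,0,1,5,4], [[0,1,2,3,4,5], [3,5,1,4,0,2], [4,2,5,0,3,1]], [[0,1,2,3,4,5]]),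
  ([2,4,0,5,1,3], [[0,1,2,3,4,5], [3,5,1,4,0,2], [4,2,5,0,3,1]], [[0,1,2,3,4,5]]),
  ([2,5,0,4,3,1], [[0,1,2,3,4,5], [1,4,3,5,0,2], [1,5,3,4,2,0], [3,4,1,5,2,0], [3,5,1,4,0,2], [4,0,5,2,1,3], [4,2,5,0,3,1], [5,0,4,2,3,1], [5,2,4,0,1,3]], [[0,1,2,3,4,5], [0,3,2,1,5,4], [2,1,0,3,5,4], [2,3,0,1,4,5]]),
  ([3,2,1,0,5,4], [[0,1,2,3,4,5], [1,4,3,5,0,2], [1,5,3,4,2,0], [3,4,1,5,2,0], [3,5,1,4,0,2], [4,0,5,2,1,3], [4,2,5,0,3,1], [5,0,4,2,3,1], [5,2,4,0,1,3]], [[0,1,2,3,4,5], [0,3,2,1,5,4], [2,1,0,3,5,4], [2,3,0,1,4,5]]),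
  ([3,4,5,0,1,2], [[0,1,2,3,4,5], [1,2,0,5,3,4], [1,3,5,0,2,4], [2,0,1,4,5,3], [2,5,4,1,0,3], [3,0,4,1,5,2], [3,5,1,4,0,2], [4,2,5,0,3,1], [4,3,0,5,2,1]], [[0,1,2,3,4,5], [0,4,3,2,1,5], [5,1,3,2,4,0], [5,4,2,3,1,0]]),
  ([3,5,4,0,2,1], [[0,1,2,3,4,5], [2,4,3,0,5,1], [2,4,5,1,3,0], [3,5,0,2,1,4], [3,5,1,4,0,2], [4,2,3,1,5,0], [4,2,5,0,3,1], [5,3,0,4,1,2], [5,3,1,2,0,4]], [[0,1,2,3,4,5], [0,1,4,5,2,3], [1,0,2,5,4,3], [1,0,4,3,2,5]]),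
  ([4,2,1,5,0,3], [[0,1,2,3,4,5], [2,4,3,0,5,1], [2,4,5,1,3,0], [3,5,0,2,1,4], [3,5,1,4,0,2], [4,2,3,1,5,0], [4,2,5,0,3,1], [5,3,0,4,1,2], [5,3,1,2,0,4]], [[0,1,2,3,4,5], [0,1,4,5,2,3], [1,0,2,5,4,3], [1,0,4,3,2,5]]),
  ([4,3,5,1,0,2], [[0,1,2,3,4,5], [1,4,3,5,0,2], [1,5,3,4,2,0], [3,4,1,5,2,0], [3,5,1,4,0,2], [4,0,5,2,1,3], [4,2,5,0,3,1], [5,0,4,2,3,1], [5,2,4,0,1,3]], [[0,1,2,3,4,5], [0,3,2,1,5,4], [2,1,0,3,5,4], [2,3,0,1,4,5]]),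
  ([4,5,3,2,0,1], [[0,1,2,3,4,5], [1,2,0,5,3,4], [1,3,5,0,2,4], [2,0,1,4,5,3], [2,5,4,1,0,3], [3,0,4,1,5,2], [3,5,1,4,0,2], [4,2,5,0,3,1], [4,3,0,5,2,1]], [[0,1,2,3,4,5], [0,4,3,2,1,5], [5,1,3,2,4,0], [5,4,2,3,1,0]]),
  ([5,2,1,4,3,0], [[0,1,2,3,4,5], [1,2,0,5,3,4], [1,3,5,0,2,4], [2,0,1,4,5,3], [2,5,4,1,0,3], [3,0,4,1,5,2], [3,5,1,4,0,2], [4,2,5,0,3,1], [4,3,0,5,2,1]], [[0,1,2,3,4,5], [0,4,3,2,1,5], [5,1,3,2,4,0], [5,4,2,3,1,0]]),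
  ([5,3,4,1,2,0], [[0,1,2,3,4,5], [3,5,1,4,0,2], [4,2,5,0,3,1]], [[0,1,2,3,4,5]]),
  ([5,4,3,2,1,0], [[0,1,2,3,4,5], [3,5,1,4,0,2], [4,2,5,0,3,1]], [[0,1,2,3,4,5]])]

theorem tbl4 : ∀ cz ∈ L15C, ∃ d ∈ dat4, d.1 = cz ∧ checks x0c c4 cz d.2.1 d.2.2 := by decide +kernel

def dat5 : List (Cd × List Cd × List Cd) := [
  ([1,0,3,2,5,4], [[0,1,2,3,4,5], [3,4,1,5,2,0], [5,2,4,0,1,3]], [[0,1,2,3,4,5]]),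
  ([1,0,4,5,2,3], [[0,1,2,3,4,5], [2,5,3,0,1,4], [2,5,4,1,0,3], [3,4,0,2,5,1], [3,4,1,5,2,0], [4,3,0,5,2,1], [4,3,1,2,5,0], [5,2,3,1,0,4], [5,2,4,0,1,3]], [[0,1,2,3,4,5], [0,1,5,4,3,2], [1,0,2,4,3,5], [1,0,5,3,4,2]]),
  ([1,0,5,4,3,2], [[0,1,2,3,4,5], [3,4,1,5,2,0], [5,2,4,0,1,3]], [[0,1,2,3,4,5]]),
  ([2,3,0,1,5,4], [[0,1,2,3,4,5], [3,4,1,5,2,0], [5,2,4,0,1,3]], [[0,1,2,3,4,5]]),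
  ([2,4,0,5,1,3], [[0,1,2,3,4,5], [1,4,3,5,0,2], [1,5,3,4,2,0], [3,4,1,5,2,0], [3,5,1,4,0,2], [4,0,5,2,1,3], [4,2,5,0,3,1], [5,0,4,2,3,1], [5,2,4,0,1,3]], [[0,1,2,3,4,5], [0,3,2,1,5,4], [2,1,0,3,5,4], [2,3,0,1,4,5]]),
  ([2,5,0,4,3,1], [[0,1,2,3,4,5], [3,4,1,5,2,0], [5,2,4,0,1,3]], [[0,1,2,3,4,5]]),
  ([3,2,1,0,5,4], [[0,1,2,3,4,5], [1,4,3,5,0,2], [1,5,3,4,2,0], [3,4,1,5,2,0], [3,5,1,4,0,2], [4,0,5,2,1,3], [4,2,5,0,3,1], [5,0,4,2,3,1], [5,2,4,0,1,3]], [[0,1,2,3,4,5], [0,3,2,1,5,4], [2,1,0,3,5,4], [2,3,0,1,4,5]]),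
  ([3,4,5,0,1,2], [[0,1,2,3,4,5], [2,5,3,0,1,4], [2,5,4,1,0,3], [3,4,0,2,5,1], [3,4,1,5,2,0], [4,3,0,5,2,1], [4,3,1,2,5,0], [5,2,3,1,0,4], [5,2,4,0,1,3]], [[0,1,2,3,4,5], [0,1,5,4,3,2], [1,0,2,4,3,5], [1,0,5,3,4,2]]),
  ([3,5,4,0,2,1], [[0,1,2,3,4,5], [1,2,0,4,5,3], [1,3,4,0,5,2], [2,0,1,5,3,4], [2,4,5,1,3,0], [3,0,5,1,2,4], [3,4,1,5,2,0], [5,2,4,0,1,3], [5,3,0,4,1,2]], [[0,1,2,3,4,5], [0,5,3,2,4,1], [4,1,3,2,0,5], [4,5,2,3,0,1]]),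
  ([4,2,1,5,0,3], [[0,1,2,3,4,5], [1,2,0,4,5,3], [1,3,4,0,5,2], [2,0,1,5,3,4], [2,4,5,1,3,0], [3,0,5,1,2,4], [3,4,1,5,2,0], [5,2,4,0,1,3], [5,3,0,4,1,2]], [[0,1,2,3,4,5], [0,5,3,2,4,1], [4,1,3,2,0,5], [4,5,2,3,0,1]]),
  ([4,3,5,1,0,2], [[0,1,2,3,4,5], [3,4,1,5,2,0], [5,2,4,0,1,3]], [[0,1,2,3,4,5]]),
  ([4,5,3,2,0,1], [[0,1,2,3,4,5], [3,4,1,5,2,0], [5,2,4,0,1,3]], [[0,1,2,3,4,5]]),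
  ([5,2,1,4,3,0], [[0,1,2,3,4,5], [2,5,3,0,1,4], [2,5,4,1,0,3], [3,4,0,2,5,1], [3,4,1,5,2,0], [4,3,0,5,2,1], [4,3,1,2,5,0], [5,2,3,1,0,4], [5,2,4,0,1,3]], [[0,1,2,3,4,5], [0,1,5,4,3,2], [1,0,2,4,3,5], [1,0,5,3,4,2]]),
  ([5,3,4,1,2,0], [[0,1,2,3,4,5], [1,4,3,5,0,2], [1,5,3,4,2,0], [3,4,1,5,2,0], [3,5,1,4,0,2], [4,0,5,2,1,3], [4,2,5,0,3,1], [5,0,4,2,3,1], [5,2,4,0,1,3]], [[0,1,2,3,4,5], [0,3,2,1,5,4], [2,1,0,3,5,4], [2,3,0,1,4,5]]),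
  ([5,4,3,2,1,0], [[0,1,2,3,4,5], [1,2,0,4,5,3], [1,3,4,0,5,2], [2,0,1,5,3,4], [2,4,5,1,3,0], [3,0,5,1,2,4], [3,4,1,5,2,0], [5,2,4,0,1,3], [5,3,0,4,1,2]], [[0,1,2,3,4,5], [0,5,3,2,4,1], [4,1,3,2,0,5], [4,5,2,3,0,1]])]

theorem tbl5 : ∀ cz ∈ L15C, ∃ d ∈ dat5, d.1 = cz ∧ checks x0c c5 cz d.2.1 d.2.2 := by decide +kernel

def dat6 : List (Cd × List Cd × List Cd) := [
  ([1,0,3,2,5,4], [[0,1,2,3,4,5]], [[0,1,2,3,4,5]]),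
  ([1,0,4,5,2,3], [[0,1,2,3,4,5], [2,3,5,4,1,0], [5,4,0,1,3,2]], [[0,1,2,3,4,5]]),
  ([1,0,5,4,3,2], [[0,1,2,3,4,5], [2,3,4,5,0,1], [4,5,0,1,2,3]], [[0,1,2,3,4,5]]),
  ([2,3,0,1,5,4], [[0,1,2,3,4,5]], [[0,1,2,3,4,5]]),
  ([2,4,0,5,1,3], [[0,1,2,3,4,5], [1,4,3,5,0,2], [1,5,3,4,2,0], [3,4,1,5,2,0], [3,5,1,4,0,2], [4,0,5,2,1,3], [4,2,5,0,3,1], [5,0,4,2,3,1], [5,2,4,0,1,3]], [[0,1,2,3,4,5], [0,3,2,1,5,4], [2,1,0,3,5,4], [2,3,0,1,4,5]]),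
  ([2,5,0,4,3,1], [[0,1,2,3,4,5], [1,4,3,5,0,2], [1,5,3,4,2,0], [3,4,1,5,2,0], [3,5,1,4,0,2], [4,0,5,2,1,3], [4,2,5,0,3,1], [5,0,4,2,3,1], [5,2,4,0,1,3]], [[0,1,2,3,4,5], [0,3,2,1,5,4], [2,1,0,3,5,4], [2,3,0,1,4,5]]),
  ([3,2,1,0,5,4], [[0,1,2,3,4,5]], [[0,1,2,3,4,5]]),
  ([3,4,5,0,1,2], [[0,1,2,3,4,5], [2,5,4,1,0,3], [4,3,0,5,2,1]], [[0,1,2,3,4,5]]),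
  ([3,5,4,0,2,1], [[0,1,2,3,4,5], [2,4,5,1,3,0], [5,3,0,4,1,2]], [[0,1,2,3,4,5]]),
  ([4,2,1,5,0,3], [[0,1,2,3,4,5], [2,4,5,1,3,0], [5,3,0,4,1,2]], [[0,1,2,3,4,5]]),
  ([4,3,5,1,0,2], [[0,1,2,3,4,5], [1,4,3,5,0,2], [1,5,3,4,2,0], [3,4,1,5,2,0], [3,5,1,4,0,2], [4,0,5,2,1,3], [4,2,5,0,3,1], [5,0,4,2,3,1], [5,2,4,0,1,3]], [[0,1,2,3,4,5], [0,3,2,1,5,4], [2,1,0,3,5,4], [2,3,0,1,4,5]]),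
  ([4,5,3,2,0,1], [[0,1,2,3,4,5], [2,3,5,4,1,0], [5,4,0,1,3,2]], [[0,1,2,3,4,5]]),
  ([5,2,1,4,3,0], [[0,1,2,3,4,5], [2,5,4,1,0,3], [4,3,0,5,2,1]], [[0,1,2,3,4,5]]),
  ([5,3,4,1,2,0], [[0,1,2,3,4,5], [1,4,3,5,0,2], [1,5,3,4,2,0], [3,4,1,5,2,0], [3,5,1,4,0,2], [4,0,5,2,1,3], [4,2,5,0,3,1], [5,0,4,2,3,1], [5,2,4,0,1,3]], [[0,1,2,3,4,5], [0,3,2,1,5,4], [2,1,0,3,5,4], [2,3,0,1,4,5]]),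
  ([5,4,3,2,1,0], [[0,1,2,3,4,5], [2,3,4,5,0,1], [4,5,0,1,2,3]], [[0,1,2,3,4,5]])]

theorem tbl6 : ∀ cz ∈ L15C, ∃ d ∈ dat6, d.1 = cz ∧ checks x0c c6 cz d.2.1 d.2.2 := by decide +kernel

def dat7 : List (Cd × List Cd × List Cd) := [
  ([1,0,3,2,5,4], [[0,1,2,3,4,5], [2,5,4,1,0,3], [4,3,0,5,2,1]], [[0,1,2,3,4,5]]),
  ([1,0,4,5,2,3], [[0,1,2,3,4,5], [2,5,3,0,1,4], [2,5,4,1,0,3], [3,4,0,2,5,1], [3,4,1,5,2,0], [4,3,0,5,2,1], [4,3,1,2,5,0], [5,2,3,1,0,4], [5,2,4,0,1,3]], [[0,1,2,3,4,5], [0,1,5,4,3,2], [1,0,2,4,3,5], [1,0,5,3,4,2]]),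
  ([1,0,5,4,3,2], [[0,1,2,3,4,5], [2,5,4,1,0,3], [4,3,0,5,2,1]], [[0,1,2,3,4,5]]),
  ([2,3,0,1,5,4], [[0,1,2,3,4,5], [1,4,5,2,0,3], [1,5,4,2,3,0], [2,4,5,1,3,0], [2,5,4,1,0,3], [4,0,3,5,1,2], [4,3,0,5,2,1], [5,0,3,4,2,1], [5,3,0,4,1,2]], [[0,1,2,3,4,5], [0,2,1,3,5,4], [3,1,2,0,5,4], [3,2,1,0,4,5]]),
  ([2,4,0,5,1,3], [[0,1,2,3,4,5], [1,2,0,5,3,4], [1,3,5,0,2,4], [2,0,1,4,5,3], [2,5,4,1,0,3], [3,0,4,1,5,2], [3,5,1,4,0,2], [4,2,5,0,3,1], [4,3,0,5,2,1]], [[0,1,2,3,4,5], [0,4,3,2,1,5], [5,1,3,2,4,0], [5,4,2,3,1,0]]),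
  ([2,5,0,4,3,1], [[0,1,2,3,4,5], [2,5,3,0,1,4], [2,5,4,1,0,3], [3,4,0,2,5,1], [3,4,1,5,2,0], [4,3,0,5,2,1], [4,3,1,2,5,0], [5,2,3,1,0,4], [5,2,4,0,1,3]], [[0,1,2,3,4,5], [0,1,5,4,3,2], [1,0,2,4,3,5], [1,0,5,3,4,2]]),
  ([3,2,1,0,5,4], [[0,1,2,3,4,5], [2,5,4,1,0,3], [4,3,0,5,2,1]], [[0,1,2,3,4,5]]),
  ([3,4,5,0,1,2], [[0,1,2,3,4,5], [2,5,4,1,0,3], [4,3,0,5,2,1]], [[0,1,2,3,4,5]]),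
  ([3,5,4,0,2,1], [[0,1,2,3,4,5], [1,4,5,2,0,3], [1,5,4,2,3,0], [2,4,5,1,3,0], [2,5,4,1,0,3], [4,0,3,5,1,2], [4,3,0,5,2,1], [5,0,3,4,2,1], [5,3,0,4,1,2]], [[0,1,2,3,4,5], [0,2,1,3,5,4], [3,1,2,0,5,4], [3,2,1,0,4,5]]),
  ([4,2,1,5,0,3], [[0,1,2,3,4,5], [1,4,5,2,0,3], [1,5,4,2,3,0], [2,4,5,1,3,0], [2,5,4,1,0,3], [4,0,3,5,1,2], [4,3,0,5,2,1], [5,0,3,4,2,1], [5,3,0,4,1,2]], [[0,1,2,3,4,5], [0,2,1,3,5,4], [3,1,2,0,5,4], [3,2,1,0,4,5]]),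
  ([4,3,5,1,0,2], [[0,1,2,3,4,5], [2,5,3,0,1,4], [2,5,4,1,0,3], [3,4,0,2,5,1], [3,4,1,5,2,0], [4,3,0,5,2,1], [4,3,1,2,5,0], [5,2,3,1,0,4], [5,2,4,0,1,3]], [[0,1,2,3,4,5], [0,1,5,4,3,2], [1,0,2,4,3,5], [1,0,5,3,4,2]]),
  ([4,5,3,2,0,1], [[0,1,2,3,4,5], [1,2,0,5,3,4], [1,3,5,0,2,4], [2,0,1,4,5,3], [2,5,4,1,0,3], [3,0,4,1,5,2], [3,5,1,4,0,2], [4,2,5,0,3,1], [4,3,0,5,2,1]], [[0,1,2,3,4,5], [0,4,3,2,1,5], [5,1,3,2,4,0], [5,4,2,3,1,0]]),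
  ([5,2,1,4,3,0], [[0,1,2,3,4,5], [2,5,4,1,0,3], [4,3,0,5,2,1]], [[0,1,2,3,4,5]]),
  ([5,3,4,1,2,0], [[0,1,2,3,4,5], [1,2,0,5,3,4], [1,3,5,0,2,4], [2,0,1,4,5,3], [2,5,4,1,0,3], [3,0,4,1,5,2], [3,5,1,4,0,2], [4,2,5,0,3,1], [4,3,0,5,2,1]], [[0,1,2,3,4,5], [0,4,3,2,1,5], [5,1,3,2,4,0], [5,4,2,3,1,0]]),
  ([5,4,3,2,1,0], [[0,1,2,3,4,5], [2,5,4,1,0,3], [4,3,0,5,2,1]], [[0,1,2,3,4,5]])]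

theorem tbl7 : ∀ cz ∈ L15C, ∃ d ∈ dat7, d.1 = cz ∧ checks x0c c7 cz d.2.1 d.2.2 := by decide +kernel

def dat8 : List (Cd × List Cd × List Cd) := [
  ([1,0,3,2,5,4], [[0,1,2,3,4,5], [2,4,5,1,3,0], [5,3,0,4,1,2]], [[0,1,2,3,4,5]]),
  ([1,0,4,5,2,3], [[0,1,2,3,4,5], [2,4,5,1,3,0], [5,3,0,4,1,2]], [[0,1,2,3,4,5]]),
  ([1,0,5,4,3,2], [[0,1,2,3,4,5], [2,4,3,0,5,1], [2,4,5,1,3,0], [3,5,0,2,1,4], [3,5,1,4,0,2], [4,2,3,1,5,0], [4,2,5,0,3,1], [5,3,0,4,1,2], [5,3,1,2,0,4]], [[0,1,2,3,4,5], [0,1,4,5,2,3], [1,0,2,5,4,3], [1,0,4,3,2,5]]),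
  ([2,3,0,1,5,4], [[0,1,2,3,4,5], [1,4,5,2,0,3], [1,5,4,2,3,0], [2,4,5,1,3,0], [2,5,4,1,0,3], [4,0,3,5,1,2], [4,3,0,5,2,1], [5,0,3,4,2,1], [5,3,0,4,1,2]], [[0,1,2,3,4,5], [0,2,1,3,5,4], [3,1,2,0,5,4], [3,2,1,0,4,5]]),
  ([2,4,0,5,1,3], [[0,1,2,3,4,5], [2,4,3,0,5,1], [2,4,5,1,3,0], [3,5,0,2,1,4], [3,5,1,4,0,2], [4,2,3,1,5,0], [4,2,5,0,3,1], [5,3,0,4,1,2], [5,3,1,2,0,4]], [[0,1,2,3,4,5], [0,1,4,5,2,3], [1,0,2,5,4,3], [1,0,4,3,2,5]]),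
  ([2,5,0,4,3,1], [[0,1,2,3,4,5], [1,2,0,4,5,3], [1,3,4,0,5,2], [2,0,1,5,3,4], [2,4,5,1,3,0], [3,0,5,1,2,4], [3,4,1,5,2,0], [5,2,4,0,1,3], [5,3,0,4,1,2]], [[0,1,2,3,4,5], [0,5,3,2,4,1], [4,1,3,2,0,5], [4,5,2,3,0,1]]),
  ([3,2,1,0,5,4], [[0,1,2,3,4,5], [2,4,5,1,3,0], [5,3,0,4,1,2]], [[0,1,2,3,4,5]]),
  ([3,4,5,0,1,2], [[0,1,2,3,4,5], [1,4,5,2,0,3], [1,5,4,2,3,0], [2,4,5,1,3,0], [2,5,4,1,0,3], [4,0,3,5,1,2], [4,3,0,5,2,1], [5,0,3,4,2,1], [5,3,0,4,1,2]], [[0,1,2,3,4,5], [0,2,1,3,5,4], [3,1,2,0,5,4], [3,2,1,0,4,5]]),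
  ([3,5,4,0,2,1], [[0,1,2,3,4,5], [2,4,5,1,3,0], [5,3,0,4,1,2]], [[0,1,2,3,4,5]]),
  ([4,2,1,5,0,3], [[0,1,2,3,4,5], [2,4,5,1,3,0], [5,3,0,4,1,2]], [[0,1,2,3,4,5]]),
  ([4,3,5,1,0,2], [[0,1,2,3,4,5], [1,2,0,4,5,3], [1,3,4,0,5,2], [2,0,1,5,3,4], [2,4,5,1,3,0], [3,0,5,1,2,4], [3,4,1,5,2,0], [5,2,4,0,1,3], [5,3,0,4,1,2]], [[0,1,2,3,4,5], [0,5,3,2,4,1], [4,1,3,2,0,5], [4,5,2,3,0,1]]),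
  ([4,5,3,2,0,1], [[0,1,2,3,4,5], [2,4,5,1,3,0], [5,3,0,4,1,2]], [[0,1,2,3,4,5]]),
  ([5,2,1,4,3,0], [[0,1,2,3,4,5], [1,4,5,2,0,3], [1,5,4,2,3,0], [2,4,5,1,3,0], [2,5,4,1,0,3], [4,0,3,5,1,2], [4,3,0,5,2,1], [5,0,3,4,2,1], [5,3,0,4,1,2]], [[0,1,2,3,4,5], [0,2,1,3,5,4], [3,1,2,0,5,4], [3,2,1,0,4,5]]),
  ([5,3,4,1,2,0], [[0,1,2,3,4,5], [2,4,3,0,5,1], [2,4,5,1,3,0], [3,5,0,2,1,4], [3,5,1,4,0,2], [4,2,3,1,5,0], [4,2,5,0,3,1], [5,3,0,4,1,2], [5,3,1,2,0,4]], [[0,1,2,3,4,5], [0,1,4,5,2,3], [1,0,2,5,4,3], [1,0,4,3,2,5]]),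
  ([5,4,3,2,1,0], [[0,1,2,3,4,5], [1,2,0,4,5,3], [1,3,4,0,5,2], [2,0,1,5,3,4], [2,4,5,1,3,0], [3,0,5,1,2,4], [3,4,1,5,2,0], [5,2,4,0,1,3], [5,3,0,4,1,2]], [[0,1,2,3,4,5], [0,5,3,2,4,1], [4,1,3,2,0,5], [4,5,2,3,0,1]])]

theorem tbl8 : ∀ cz ∈ L15C, ∃ d ∈ dat8, d.1 = cz ∧ checks x0c c8 cz d.2.1 d.2.2 := by decide +kernel

def dat9 : List (Cd × List Cd × List Cd) := [
  ([1,0,3,2,5,4], [[0,1,2,3,4,5], [2,4,5,1,3,0], [5,3,0,4,1,2]], [[0,1,2,3,4,5]]),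
  ([1,0,4,5,2,3], [[0,1,2,3,4,5], [2,4,5,1,3,0], [5,3,0,4,1,2]], [[0,1,2,3,4,5]]),
  ([1,0,5,4,3,2], [[0,1,2,3,4,5], [2,4,3,0,5,1], [2,4,5,1,3,0], [3,5,0,2,1,4], [3,5,1,4,0,2], [4,2,3,1,5,0], [4,2,5,0,3,1], [5,3,0,4,1,2], [5,3,1,2,0,4]], [[0,1,2,3,4,5], [0,1,4,5,2,3], [1,0,2,5,4,3], [1,0,4,3,2,5]]),
  ([2,3,0,1,5,4], [[0,1,2,3,4,5], [1,4,5,2,0,3], [1,5,4,2,3,0], [2,4,5,1,3,0], [2,5,4,1,0,3], [4,0,3,5,1,2], [4,3,0,5,2,1], [5,0,3,4,2,1], [5,3,0,4,1,2]], [[0,1,2,3,4,5], [0,2,1,3,5,4], [3,1,2,0,5,4], [3,2,1,0,4,5]]),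
  ([2,4,0,5,1,3], [[0,1,2,3,4,5], [2,4,3,0,5,1], [2,4,5,1,3,0], [3,5,0,2,1,4], [3,5,1,4,0,2], [4,2,3,1,5,0], [4,2,5,0,3,1], [5,3,0,4,1,2], [5,3,1,2,0,4]], [[0,1,2,3,4,5], [0,1,4,5,2,3], [1,0,2,5,4,3], [1,0,4,3,2,5]]),
  ([2,5,0,4,3,1], [[0,1,2,3,4,5], [1,2,0,4,5,3], [1,3,4,0,5,2], [2,0,1,5,3,4], [2,4,5,1,3,0], [3,0,5,1,2,4], [3,4,1,5,2,0], [5,2,4,0,1,3], [5,3,0,4,1,2]], [[0,1,2,3,4,5], [0,5,3,2,4,1], [4,1,3,2,0,5], [4,5,2,3,0,1]]),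
  ([3,2,1,0,5,4], [[0,1,2,3,4,5], [2,4,5,1,3,0], [5,3,0,4,1,2]], [[0,1,2,3,4,5]]),
  ([3,4,5,0,1,2], [[0,1,2,3,4,5], [1,4,5,2,0,3], [1,5,4,2,3,0], [2,4,5,1,3,0], [2,5,4,1,0,3], [4,0,3,5,1,2], [4,3,0,5,2,1], [5,0,3,4,2,1], [5,3,0,4,1,2]], [[0,1,2,3,4,5], [0,2,1,3,5,4], [3,1,2,0,5,4], [3,2,1,0,4,5]]),
  ([3,5,4,0,2,1], [[0,1,2,3,4,5], [2,4,5,1,3,0], [5,3,0,4,1,2]], [[0,1,2,3,4,5]]),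
  ([4,2,1,5,0,3], [[0,1,2,3,4,5], [2,4,5,1,3,0], [5,3,0,4,1,2]], [[0,1,2,3,4,5]]),
  ([4,3,5,1,0,2], [[0,1,2,3,4,5], [1,2,0,4,5,3], [1,3,4,0,5,2], [2,0,1,5,3,4], [2,4,5,1,3,0], [3,0,5,1,2,4], [3,4,1,5,2,0], [5,2,4,0,1,3], [5,3,0,4,1,2]], [[0,1,2,3,4,5], [0,5,3,2,4,1], [4,1,3,2,0,5], [4,5,2,3,0,1]]),
  ([4,5,3,2,0,1], [[0,1,2,3,4,5], [2,4,5,1,3,0], [5,3,0,4,1,2]], [[0,1,2,3,4,5]]),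
  ([5,2,1,4,3,0], [[0,1,2,3,4,5], [1,4,5,2,0,3], [1,5,4,2,3,0], [2,4,5,1,3,0], [2,5,4,1,0,3], [4,0,3,5,1,2], [4,3,0,5,2,1], [5,0,3,4,2,1], [5,3,0,4,1,2]], [[0,1,2,3,4,5], [0,2,1,3,5,4], [3,1,2,0,5,4], [3,2,1,0,4,5]]),
  ([5,3,4,1,2,0], [[0,1,2,3,4,5], [2,4,3,0,5,1], [2,4,5,1,3,0], [3,5,0,2,1,4], [3,5,1,4,0,2], [4,2,3,1,5,0], [4,2,5,0,3,1], [5,3,0,4,1,2], [5,3,1,2,0,4]], [[0,1,2,3,4,5], [0,1,4,5,2,3], [1,0,2,5,4,3], [1,0,4,3,2,5]]),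
  ([5,4,3,2,1,0], [[0,1,2,3,4,5], [1,2,0,4,5,3], [1,3,4,0,5,2], [2,0,1,5,3,4], [2,4,5,1,3,0], [3,0,5,1,2,4], [3,4,1,5,2,0], [5,2,4,0,1,3], [5,3,0,4,1,2]], [[0,1,2,3,4,5], [0,5,3,2,4,1], [4,1,3,2,0,5], [4,5,2,3,0,1]])]

theorem tbl9 : ∀ cz ∈ L15C, ∃ d ∈ dat9, d.1 = cz ∧ checks x0c c9 cz d.2.1 d.2.2 := by decide +kernel

def dat10 : List (Cd × List Cd × List Cd) := [
  ([1,0,3,2,5,4], [[0,1,2,3,4,5], [3,4,1,5,2,0], [5,2,4,0,1,3]], [[0,1,2,3,4,5]]),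
  ([1,0,4,5,2,3], [[0,1,2,3,4,5], [2,5,3,0,1,4], [2,5,4,1,0,3], [3,4,0,2,5,1], [3,4,1,5,2,0], [4,3,0,5,2,1], [4,3,1,2,5,0], [5,2,3,1,0,4], [5,2,4,0,1,3]], [[0,1,2,3,4,5], [0,1,5,4,3,2], [1,0,2,4,3,5], [1,0,5,3,4,2]]),
  ([1,0,5,4,3,2], [[0,1,2,3,4,5], [3,4,1,5,2,0], [5,2,4,0,1,3]], [[0,1,2,3,4,5]]),
  ([2,3,0,1,5,4], [[0,1,2,3,4,5], [3,4,1,5,2,0], [5,2,4,0,1,3]], [[0,1,2,3,4,5]]),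
  ([2,4,0,5,1,3], [[0,1,2,3,4,5], [1,4,3,5,0,2], [1,5,3,4,2,0], [3,4,1,5,2,0], [3,5,1,4,0,2], [4,0,5,2,1,3], [4,2,5,0,3,1], [5,0,4,2,3,1], [5,2,4,0,1,3]], [[0,1,2,3,4,5], [0,3,2,1,5,4], [2,1,0,3,5,4], [2,3,0,1,4,5]]),
  ([2,5,0,4,3,1], [[0,1,2,3,4,5], [3,4,1,5,2,0], [5,2,4,0,1,3]], [[0,1,2,3,4,5]]),
  ([3,2,1,0,5,4], [[0,1,2,3,4,5], [1,4,3,5,0,2], [1,5,3,4,2,0], [3,4,1,5,2,0], [3,5,1,4,0,2], [4,0,5,2,1,3], [4,2,5,0,3,1], [5,0,4,2,3,1], [5,2,4,0,1,3]], [[0,1,2,3,4,5], [0,3,2,1,5,4], [2,1,0,3,5,4], [2,3,0,1,4,5]]),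
  ([3,4,5,0,1,2], [[0,1,2,3,4,5], [2,5,3,0,1,4], [2,5,4,1,0,3], [3,4,0,2,5,1], [3,4,1,5,2,0], [4,3,0,5,2,1], [4,3,1,2,5,0], [5,2,3,1,0,4], [5,2,4,0,1,3]], [[0,1,2,3,4,5], [0,1,5,4,3,2], [1,0,2,4,3,5], [1,0,5,3,4,2]]),
  ([3,5,4,0,2,1], [[0,1,2,3,4,5], [1,2,0,4,5,3], [1,3,4,0,5,2], [2,0,1,5,3,4], [2,4,5,1,3,0], [3,0,5,1,2,4], [3,4,1,5,2,0], [5,2,4,0,1,3], [5,3,0,4,1,2]], [[0,1,2,3,4,5], [0,5,3,2,4,1], [4,1,3,2,0,5], [4,5,2,3,0,1]]),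
  ([4,2,1,5,0,3], [[0,1,2,3,4,5], [1,2,0,4,5,3], [1,3,4,0,5,2], [2,0,1,5,3,4], [2,4,5,1,3,0], [3,0,5,1,2,4], [3,4,1,5,2,0], [5,2,4,0,1,3], [5,3,0,4,1,2]], [[0,1,2,3,4,5], [0,5,3,2,4,1], [4,1,3,2,0,5], [4,5,2,3,0,1]]),
  ([4,3,5,1,0,2], [[0,1,2,3,4,5], [3,4,1,5,2,0], [5,2,4,0,1,3]], [[0,1,2,3,4,5]]),
  ([4,5,3,2,0,1], [[0,1,2,3,4,5], [3,4,1,5,2,0], [5,2,4,0,1,3]], [[0,1,2,3,4,5]]),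
  ([5,2,1,4,3,0], [[0,1,2,3,4,5], [2,5,3,0,1,4], [2,5,4,1,0,3], [3,4,0,2,5,1], [3,4,1,5,2,0], [4,3,0,5,2,1], [4,3,1,2,5,0], [5,2,3,1,0,4], [5,2,4,0,1,3]], [[0,1,2,3,4,5], [0,1,5,4,3,2], [1,0,2,4,3,5], [1,0,5,3,4,2]]),
  ([5,3,4,1,2,0], [[0,1,2,3,4,5], [1,4,3,5,0,2], [1,5,3,4,2,0], [3,4,1,5,2,0], [3,5,1,4,0,2], [4,0,5,2,1,3], [4,2,5,0,3,1], [5,0,4,2,3,1], [5,2,4,0,1,3]], [[0,1,2,3,4,5], [0,3,2,1,5,4], [2,1,0,3,5,4], [2,3,0,1,4,5]]),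
  ([5,4,3,2,1,0], [[0,1,2,3,4,5], [1,2,0,4,5,3], [1,3,4,0,5,2], [2,0,1,5,3,4], [2,4,5,1,3,0], [3,0,5,1,2,4], [3,4,1,5,2,0], [5,2,4,0,1,3], [5,3,0,4,1,2]], [[0,1,2,3,4,5], [0,5,3,2,4,1], [4,1,3,2,0,5], [4,5,2,3,0,1]])]

theorem tbl10 : ∀ cz ∈ L15C, ∃ d ∈ dat10, d.1 = cz ∧ checks x0c c10 cz d.2.1 d.2.2 := by decide +kernel

def dat11 : List (Cd × List Cd × List Cd) := [
  ([1,0,3,2,5,4], [[0,1,2,3,4,5]], [[0,1,2,3,4,5]]),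
  ([1,0,4,5,2,3], [[0,1,2,3,4,5], [2,3,5,4,1,0], [5,4,0,1,3,2]], [[0,1,2,3,4,5]]),
  ([1,0,5,4,3,2], [[0,1,2,3,4,5], [3,2,4,5,1,0], [5,4,1,0,2,3]], [[0,1,2,3,4,5]]),
  ([2,3,0,1,5,4], [[0,1,2,3,4,5], [3,2,4,5,1,0], [5,4,1,0,2,3]], [[0,1,2,3,4,5]]),
  ([2,4,0,5,1,3], [[0,1,2,3,4,5], [1,2,0,5,3,4], [1,3,5,0,2,4], [2,0,1,4,5,3], [2,5,4,1,0,3], [3,0,4,1,5,2], [3,5,1,4,0,2], [4,2,5,0,3,1], [4,3,0,5,2,1]], [[0,1,2,3,4,5], [0,4,3,2,1,5], [5,1,3,2,4,0], [5,4,2,3,1,0]]),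
  ([2,5,0,4,3,1], [[0,1,2,3,4,5], [3,4,1,5,2,0], [5,2,4,0,1,3]], [[0,1,2,3,4,5]]),
  ([3,2,1,0,5,4], [[0,1,2,3,4,5], [2,3,5,4,1,0], [5,4,0,1,3,2]], [[0,1,2,3,4,5]]),
  ([3,4,5,0,1,2], [[0,1,2,3,4,5], [1,2,0,5,3,4], [1,3,5,0,2,4], [2,0,1,4,5,3], [2,5,4,1,0,3], [3,0,4,1,5,2], [3,5,1,4,0,2], [4,2,5,0,3,1], [4,3,0,5,2,1]], [[0,1,2,3,4,5], [0,4,3,2,1,5], [5,1,3,2,4,0], [5,4,2,3,1,0]]),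
  ([3,5,4,0,2,1], [[0,1,2,3,4,5], [2,4,5,1,3,0], [5,3,0,4,1,2]], [[0,1,2,3,4,5]]),
  ([4,2,1,5,0,3], [[0,1,2,3,4,5], [2,4,5,1,3,0], [5,3,0,4,1,2]], [[0,1,2,3,4,5]]),
  ([4,3,5,1,0,2], [[0,1,2,3,4,5], [3,4,1,5,2,0], [5,2,4,0,1,3]], [[0,1,2,3,4,5]]),
  ([4,5,3,2,0,1], [[0,1,2,3,4,5]], [[0,1,2,3,4,5]]),
  ([5,2,1,4,3,0], [[0,1,2,3,4,5], [1,2,0,5,3,4], [1,3,5,0,2,4], [2,0,1,4,5,3], [2,5,4,1,0,3], [3,0,4,1,5,2], [3,5,1,4,0,2], [4,2,5,0,3,1], [4,3,0,5,2,1]], [[0,1,2,3,4,5], [0,4,3,2,1,5], [5,1,3,2,4,0], [5,4,2,3,1,0]]),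
  ([5,3,4,1,2,0], [[0,1,2,3,4,5], [1,2,0,5,3,4], [1,3,5,0,2,4], [2,0,1,4,5,3], [2,5,4,1,0,3], [3,0,4,1,5,2], [3,5,1,4,0,2], [4,2,5,0,3,1], [4,3,0,5,2,1]], [[0,1,2,3,4,5], [0,4,3,2,1,5], [5,1,3,2,4,0], [5,4,2,3,1,0]]),
  ([5,4,3,2,1,0], [[0,1,2,3,4,5]], [[0,1,2,3,4,5]])]

theorem tbl11 : ∀ cz ∈ L15C, ∃ d ∈ dat11, d.1 = cz ∧ checks x0c c11 cz d.2.1 d.2.2 := by decide +kernel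

def dat12 : List (Cd × List Cd × List Cd) := [
  ([1,0,3,2,5,4], [[0,1,2,3,4,5], [2,5,4,1,0,3], [4,3,0,5,2,1]], [[0,1,2,3,4,5]]),
  ([1,0,4,5,2,3], [[0,1,2,3,4,5], [2,5,3,0,1,4], [2,5,4,1,0,3], [3,4,0,2,5,1], [3,4,1,5,2,0], [4,3,0,5,2,1], [4,3,1,2,5,0], [5,2,3,1,0,4], [5,2,4,0,1,3]], [[0,1,2,3,4,5], [0,1,5,4,3,2], [1,0,2,4,3,5], [1,0,5,3,4,2]]),
  ([1,0,5,4,3,2], [[0,1,2,3,4,5], [2,5,4,1,0,3], [4,3,0,5,2,1]], [[0,1,2,3,4,5]]),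
  ([2,3,0,1,5,4], [[0,1,2,3,4,5], [1,4,5,2,0,3], [1,5,4,2,3,0], [2,4,5,1,3,0], [2,5,4,1,0,3], [4,0,3,5,1,2], [4,3,0,5,2,1], [5,0,3,4,2,1], [5,3,0,4,1,2]], [[0,1,2,3,4,5], [0,2,1,3,5,4], [3,1,2,0,5,4], [3,2,1,0,4,5]]),
  ([2,4,0,5,1,3], [[0,1,2,3,4,5], [1,2,0,5,3,4], [1,3,5,0,2,4], [2,0,1,4,5,3], [2,5,4,1,0,3], [3,0,4,1,5,2], [3,5,1,4,0,2], [4,2,5,0,3,1], [4,3,0,5,2,1]], [[0,1,2,3,4,5], [0,4,3,2,1,5], [5,1,3,2,4,0], [5,4,2,3,1,0]]),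
  ([2,5,0,4,3,1], [[0,1,2,3,4,5], [2,5,3,0,1,4], [2,5,4,1,0,3], [3,4,0,2,5,1], [3,4,1,5,2,0], [4,3,0,5,2,1], [4,3,1,2,5,0], [5,2,3,1,0,4], [5,2,4,0,1,3]], [[0,1,2,3,4,5], [0,1,5,4,3,2], [1,0,2,4,3,5], [1,0,5,3,4,2]]),
  ([3,2,1,0,5,4], [[0,1,2,3,4,5], [2,5,4,1,0,3], [4,3,0,5,2,1]], [[0,1,2,3,4,5]]),
  ([3,4,5,0,1,2], [[0,1,2,3,4,5], [2,5,4,1,0,3], [4,3,0,5,2,1]], [[0,1,2,3,4,5]]),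
  ([3,5,4,0,2,1], [[0,1,2,3,4,5], [1,4,5,2,0,3], [1,5,4,2,3,0], [2,4,5,1,3,0], [2,5,4,1,0,3], [4,0,3,5,1,2], [4,3,0,5,2,1], [5,0,3,4,2,1], [5,3,0,4,1,2]], [[0,1,2,3,4,5], [0,2,1,3,5,4], [3,1,2,0,5,4], [3,2,1,0,4,5]]),
  ([4,2,1,5,0,3], [[0,1,2,3,4,5], [1,4,5,2,0,3], [1,5,4,2,3,0], [2,4,5,1,3,0], [2,5,4,1,0,3], [4,0,3,5,1,2], [4,3,0,5,2,1], [5,0,3,4,2,1], [5,3,0,4,1,2]], [[0,1,2,3,4,5], [0,2,1,3,5,4], [3,1,2,0,5,4], [3,2,1,0,4,5]]),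
  ([4,3,5,1,0,2], [[0,1,2,3,4,5], [2,5,3,0,1,4], [2,5,4,1,0,3], [3,4,0,2,5,1], [3,4,1,5,2,0], [4,3,0,5,2,1], [4,3,1,2,5,0], [5,2,3,1,0,4], [5,2,4,0,1,3]], [[0,1,2,3,4,5], [0,1,5,4,3,2], [1,0,2,4,3,5], [1,0,5,3,4,2]]),
  ([4,5,3,2,0,1], [[0,1,2,3,4,5], [1,2,0,5,3,4], [1,3,5,0,2,4], [2,0,1,4,5,3], [2,5,4,1,0,3], [3,0,4,1,5,2], [3,5,1,4,0,2], [4,2,5,0,3,1], [4,3,0,5,2,1]], [[0,1,2,3,4,5], [0,4,3,2,1,5], [5,1,3,2,4,0], [5,4,2,3,1,0]]),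
  ([5,2,1,4,3,0], [[0,1,2,3,4,5], [2,5,4,1,0,3], [4,3,0,5,2,1]], [[0,1,2,3,4,5]]),
  ([5,3,4,1,2,0], [[0,1,2,3,4,5], [1,2,0,5,3,4], [1,3,5,0,2,4], [2,0,1,4,5,3], [2,5,4,1,0,3], [3,0,4,1,5,2], [3,5,1,4,0,2], [4,2,5,0,3,1], [4,3,0,5,2,1]], [[0,1,2,3,4,5], [0,4,3,2,1,5], [5,1,3,2,4,0], [5,4,2,3,1,0]]),
  ([5,4,3,2,1,0], [[0,1,2,3,4,5], [2,5,4,1,0,3], [4,3,0,5,2,1]], [[0,1,2,3,4,5]])]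

theorem tbl12 : ∀ cz ∈ L15C, ∃ d ∈ dat12, d.1 = cz ∧ checks x0c c12 cz d.2.1 d.2.2 := by decide +kernel

def dat13 : List (Cd × List Cd × List Cd) := [
  ([1,0,3,2,5,4], [[0,1,2,3,4,5], [3,5,1,4,0,2], [4,2,5,0,3,1]], [[0,1,2,3,4,5]]),
  ([1,0,4,5,2,3], [[0,1,2,3,4,5], [3,5,1,4,0,2], [4,2,5,0,3,1]], [[0,1,2,3,4,5]]),
  ([1,0,5,4,3,2], [[0,1,2,3,4,5], [2,4,3,0,5,1], [2,4,5,1,3,0], [3,5,0,2,1,4], [3,5,1,4,0,2], [4,2,3,1,5,0], [4,2,5,0,3,1], [5,3,0,4,1,2], [5,3,1,2,0,4]], [[0,1,2,3,4,5], [0,1,4,5,2,3], [1,0,2,5,4,3], [1,0,4,3,2,5]]),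
  ([2,3,0,1,5,4], [[0,1,2,3,4,5], [3,5,1,4,0,2], [4,2,5,0,3,1]], [[0,1,2,3,4,5]]),
  ([2,4,0,5,1,3], [[0,1,2,3,4,5], [3,5,1,4,0,2], [4,2,5,0,3,1]], [[0,1,2,3,4,5]]),
  ([2,5,0,4,3,1], [[0,1,2,3,4,5], [1,4,3,5,0,2], [1,5,3,4,2,0], [3,4,1,5,2,0], [3,5,1,4,0,2], [4,0,5,2,1,3], [4,2,5,0,3,1], [5,0,4,2,3,1], [5,2,4,0,1,3]], [[0,1,2,3,4,5], [0,3,2,1,5,4], [2,1,0,3,5,4], [2,3,0,1,4,5]]),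
  ([3,2,1,0,5,4], [[0,1,2,3,4,5], [1,4,3,5,0,2], [1,5,3,4,2,0], [3,4,1,5,2,0], [3,5,1,4,0,2], [4,0,5,2,1,3], [4,2,5,0,3,1], [5,0,4,2,3,1], [5,2,4,0,1,3]], [[0,1,2,3,4,5], [0,3,2,1,5,4], [2,1,0,3,5,4], [2,3,0,1,4,5]]),
  ([3,4,5,0,1,2], [[0,1,2,3,4,5], [1,2,0,5,3,4], [1,3,5,0,2,4], [2,0,1,4,5,3], [2,5,4,1,0,3], [3,0,4,1,5,2], [3,5,1,4,0,2], [4,2,5,0,3,1], [4,3,0,5,2,1]], [[0,1,2,3,4,5], [0,4,3,2,1,5], [5,1,3,2,4,0], [5,4,2,3,1,0]]),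
  ([3,5,4,0,2,1], [[0,1,2,3,4,5], [2,4,3,0,5,1], [2,4,5,1,3,0], [3,5,0,2,1,4], [3,5,1,4,0,2], [4,2,3,1,5,0], [4,2,5,0,3,1], [5,3,0,4,1,2], [5,3,1,2,0,4]], [[0,1,2,3,4,5], [0,1,4,5,2,3], [1,0,2,5,4,3], [1,0,4,3,2,5]]),
  ([4,2,1,5,0,3], [[0,1,2,3,4,5], [2,4,3,0,5,1], [2,4,5,1,3,0], [3,5,0,2,1,4], [3,5,1,4,0,2], [4,2,3,1,5,0], [4,2,5,0,3,1], [5,3,0,4,1,2], [5,3,1,2,0,4]], [[0,1,2,3,4,5], [0,1,4,5,2,3], [1,0,2,5,4,3], [1,0,4,3,2,5]]),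
  ([4,3,5,1,0,2], [[0,1,2,3,4,5], [1,4,3,5,0,2], [1,5,3,4,2,0], [3,4,1,5,2,0], [3,5,1,4,0,2], [4,0,5,2,1,3], [4,2,5,0,3,1], [5,0,4,2,3,1], [5,2,4,0,1,3]], [[0,1,2,3,4,5], [0,3,2,1,5,4], [2,1,0,3,5,4], [2,3,0,1,4,5]]),
  ([4,5,3,2,0,1], [[0,1,2,3,4,5], [1,2,0,5,3,4], [1,3,5,0,2,4], [2,0,1,4,5,3], [2,5,4,1,0,3], [3,0,4,1,5,2], [3,5,1,4,0,2], [4,2,5,0,3,1], [4,3,0,5,2,1]], [[0,1,2,3,4,5], [0,4,3,2,1,5], [5,1,3,2,4,0], [5,4,2,3,1,0]]),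
  ([5,2,1,4,3,0], [[0,1,2,3,4,5], [1,2,0,5,3,4], [1,3,5,0,2,4], [2,0,1,4,5,3], [2,5,4,1,0,3], [3,0,4,1,5,2], [3,5,1,4,0,2], [4,2,5,0,3,1], [4,3,0,5,2,1]], [[0,1,2,3,4,5], [0,4,3,2,1,5], [5,1,3,2,4,0], [5,4,2,3,1,0]]),
  ([5,3,4,1,2,0], [[0,1,2,3,4,5], [3,5,1,4,0,2], [4,2,5,0,3,1]], [[0,1,2,3,4,5]]),
  ([5,4,3,2,1,0], [[0,1,2,3,4,5], [3,5,1,4,0,2], [4,2,5,0,3,1]], [[0,1,2,3,4,5]])]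

theorem tbl13 : ∀ cz ∈ L15C, ∃ d ∈ dat13, d.1 = cz ∧ checks x0c c13 cz d.2.1 d.2.2 := by decide +kernel

def dat14 : List (Cd × List Cd × List Cd) := [
  ([1,0,3,2,5,4], [[0,1,2,3,4,5]], [[0,1,2,3,4,5]]),
  ([1,0,4,5,2,3], [[0,1,2,3,4,5], [3,2,5,4,0,1], [4,5,1,0,3,2]], [[0,1,2,3,4,5]]),
  ([1,0,5,4,3,2], [[0,1,2,3,4,5], [2,3,4,5,0,1], [4,5,0,1,2,3]], [[0,1,2,3,4,5]]),
  ([2,3,0,1,5,4], [[0,1,2,3,4,5], [3,2,5,4,0,1], [4,5,1,0,3,2]], [[0,1,2,3,4,5]]),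
  ([2,4,0,5,1,3], [[0,1,2,3,4,5], [3,5,1,4,0,2], [4,2,5,0,3,1]], [[0,1,2,3,4,5]]),
  ([2,5,0,4,3,1], [[0,1,2,3,4,5], [1,2,0,4,5,3], [1,3,4,0,5,2], [2,0,1,5,3,4], [2,4,5,1,3,0], [3,0,5,1,2,4], [3,4,1,5,2,0], [5,2,4,0,1,3], [5,3,0,4,1,2]], [[0,1,2,3,4,5], [0,5,3,2,4,1], [4,1,3,2,0,5], [4,5,2,3,0,1]]),
  ([3,2,1,0,5,4], [[0,1,2,3,4,5], [2,3,4,5,0,1], [4,5,0,1,2,3]], [[0,1,2,3,4,5]]),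
  ([3,4,5,0,1,2], [[0,1,2,3,4,5], [2,5,4,1,0,3], [4,3,0,5,2,1]], [[0,1,2,3,4,5]]),
  ([3,5,4,0,2,1], [[0,1,2,3,4,5], [1,2,0,4,5,3], [1,3,4,0,5,2], [2,0,1,5,3,4], [2,4,5,1,3,0], [3,0,5,1,2,4], [3,4,1,5,2,0], [5,2,4,0,1,3], [5,3,0,4,1,2]], [[0,1,2,3,4,5], [0,5,3,2,4,1], [4,1,3,2,0,5], [4,5,2,3,0,1]]),
  ([4,2,1,5,0,3], [[0,1,2,3,4,5], [1,2,0,4,5,3], [1,3,4,0,5,2], [2,0,1,5,3,4], [2,4,5,1,3,0], [3,0,5,1,2,4], [3,4,1,5,2,0], [5,2,4,0,1,3], [5,3,0,4,1,2]], [[0,1,2,3,4,5], [0,5,3,2,4,1], [4,1,3,2,0,5], [4,5,2,3,0,1]]),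
  ([4,3,5,1,0,2], [[0,1,2,3,4,5], [1,2,0,4,5,3], [1,3,4,0,5,2], [2,0,1,5,3,4], [2,4,5,1,3,0], [3,0,5,1,2,4], [3,4,1,5,2,0], [5,2,4,0,1,3], [5,3,0,4,1,2]], [[0,1,2,3,4,5], [0,5,3,2,4,1], [4,1,3,2,0,5], [4,5,2,3,0,1]]),
  ([4,5,3,2,0,1], [[0,1,2,3,4,5]], [[0,1,2,3,4,5]]),
  ([5,2,1,4,3,0], [[0,1,2,3,4,5], [2,5,4,1,0,3], [4,3,0,5,2,1]], [[0,1,2,3,4,5]]),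
  ([5,3,4,1,2,0], [[0,1,2,3,4,5], [3,5,1,4,0,2], [4,2,5,0,3,1]], [[0,1,2,3,4,5]]),
  ([5,4,3,2,1,0], [[0,1,2,3,4,5]], [[0,1,2,3,4,5]])]

theorem tbl14 : ∀ cz ∈ L15C, ∃ d ∈ dat14, d.1 = cz ∧ checks x0c c14 cz d.2.1 d.2.2 := by decide +kernel



theorem caseY0 (w : P) (hw : enc w ∈ L15C) :
    IsSolvable (Subgroup.closure ({x0, m 0 1 2 3 4 5, w} : Set P)) := by
  obtain ⟨d, hd, hkey, hchk⟩ := tbl0 (enc w) hw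
  refine solvable_of_checks x0 (m 0 1 2 3 4 5) w d.2.1 d.2.2 ?_
  have e1 : enc x0 = x0c := by decide
  have e2 : enc (m 0 1 2 3 4 5) = c0 := by decide
  rw [e1, e2]
  exact hchk

theorem caseY1 (w : P) (hw : enc w ∈ L15C) :
    IsSolvable (Subgroup.closure ({x0, m 0 1 2 4 3 5, w} : Set P)) := by
  obtain ⟨d, hd, hkey, hchk⟩ := tbl1 (enc w) hw
  refine solvable_of_checks x0 (m 0 1 2 4 3 5) w d.2.1 d.2.2 ?_
  have e1 : enc x0 = x0c := by decide
  have e2 : enc (m 0 1 2 4 3 5) = c1 := by decide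
  rw [e1, e2]
  exact hchk

theorem caseY2 (w : P) (hw : enc w ∈ L15C) :
    IsSolvable (Subgroup.closure ({x0, m 0 1 2 5 3 4, w} : Set P)) := by
  obtain ⟨d, hd, hkey, hchk⟩ := tbl2 (enc w) hw
  refine solvable_of_checks x0 (m 0 1 2 5 3 4) w d.2.1 d.2.2 ?_
  have e1 : enc x0 = x0c := by decide
  have e2 : enc (m 0 1 2 5 3 4) = c2 := by decide
  rw [e1, e2]
  exact hchk

theorem caseY3 (w : P) (hw : enc w ∈ L15C) :
    IsSolvable (Subgroup.closure ({x0, m 0 2 1 3 4 5, w} : Set P)) := by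
  obtain ⟨d, hd, hkey, hchk⟩ := tbl3 (enc w) hw
  refine solvable_of_checks x0 (m 0 2 1 3 4 5) w d.2.1 d.2.2 ?_
  have e1 : enc x0 = x0c := by decide
  have e2 : enc (m 0 2 1 3 4 5) = c3 := by decide
  rw [e1, e2]
  exact hchk

theorem caseY4 (w : P) (hw : enc w ∈ L15C) :
    IsSolvable (Subgroup.closure ({x0, m 0 2 1 4 3 5, w} : Set P)) := by
  obtain ⟨d, hd, hkey, hchk⟩ := tbl4 (enc w) hw
  refine solvable_of_checks x0 (m 0 2 1 4 3 5) w d.2.1 d.2.2 ?_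
  have e1 : enc x0 = x0c := by decide
  have e2 : enc (m 0 2 1 4 3 5) = c4 := by decide
  rw [e1, e2]
  exact hchk

theorem caseY5 (w : P) (hw : enc w ∈ L15C) :
    IsSolvable (Subgroup.closure ({x0, m 0 2 1 5 3 4, w} : Set P)) := by
  obtain ⟨d, hd, hkey, hchk⟩ := tbl5 (enc w) hw
  refine solvable_of_checks x0 (m 0 2 1 5 3 4) w d.2.1 d.2.2 ?_
  have e1 : enc x0 = x0c := by decide
  have e2 : enc (m 0 2 1 5 3 4) = c5 := by decide
  rw [e1, e2]
  exact hchk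

theorem caseY6 (w : P) (hw : enc w ∈ L15C) :
    IsSolvable (Subgroup.closure ({x0, m 0 3 1 2 4 5, w} : Set P)) := by
  obtain ⟨d, hd, hkey, hchk⟩ := tbl6 (enc w) hw
  refine solvable_of_checks x0 (m 0 3 1 2 4 5) w d.2.1 d.2.2 ?_
  have e1 : enc x0 = x0c := by decide
  have e2 : enc (m 0 3 1 2 4 5) = c6 := by decide
  rw [e1, e2]
  exact hchk

theorem caseY7 (w : P) (hw : enc w ∈ L15C) :
    IsSolvable (Subgroup.closure ({x0, m 0 3 1 4 2 5, w} : Set P)) := by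
  obtain ⟨d, hd, hkey, hchk⟩ := tbl7 (enc w) hw
  refine solvable_of_checks x0 (m 0 3 1 4 2 5) w d.2.1 d.2.2 ?_
  have e1 : enc x0 = x0c := by decide
  have e2 : enc (m 0 3 1 4 2 5) = c7 := by decide
  rw [e1, e2]
  exact hchk

theorem caseY8 (w : P) (hw : enc w ∈ L15C) :
    IsSolvable (Subgroup.closure ({x0, m 0 3 1 5 2 4, w} : Set P)) := by
  obtain ⟨d, hd, hkey, hchk⟩ := tbl8 (enc w) hw
  refine solvable_of_checks x0 (m 0 3 1 5 2 4) w d.2.1 d.2.2 ?_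
  have e1 : enc x0 = x0c := by decide
  have e2 : enc (m 0 3 1 5 2 4) = c8 := by decide
  rw [e1, e2]
  exact hchk

theorem caseY9 (w : P) (hw : enc w ∈ L15C) :
    IsSolvable (Subgroup.closure ({x0, m 0 4 1 2 3 5, w} : Set P)) := by
  obtain ⟨d, hd, hkey, hchk⟩ := tbl9 (enc w) hw
  refine solvable_of_checks x0 (m 0 4 1 2 3 5) w d.2.1 d.2.2 ?_
  have e1 : enc x0 = x0c := by decide
  have e2 : enc (m 0 4 1 2 3 5) = c9 := by decide
  rw [e1, e2]
  exact hchk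

theorem caseY10 (w : P) (hw : enc w ∈ L15C) :
    IsSolvable (Subgroup.closure ({x0, m 0 4 1 3 2 5, w} : Set P)) := by
  obtain ⟨d, hd, hkey, hchk⟩ := tbl10 (enc w) hw
  refine solvable_of_checks x0 (m 0 4 1 3 2 5) w d.2.1 d.2.2 ?_
  have e1 : enc x0 = x0c := by decide
  have e2 : enc (m 0 4 1 3 2 5) = c10 := by decide
  rw [e1, e2]
  exact hchk

theorem caseY11 (w : P) (hw : enc w ∈ L15C) :
    IsSolvable (Subgroup.closure ({x0, m 0 4 1 5 2 3, w} : Set P)) := by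
  obtain ⟨d, hd, hkey, hchk⟩ := tbl11 (enc w) hw
  refine solvable_of_checks x0 (m 0 4 1 5 2 3) w d.2.1 d.2.2 ?_
  have e1 : enc x0 = x0c := by decide
  have e2 : enc (m 0 4 1 5 2 3) = c11 := by decide
  rw [e1, e2]
  exact hchk

theorem caseY12 (w : P) (hw : enc w ∈ L15C) :
    IsSolvable (Subgroup.closure ({x0, m 0 5 1 2 3 4, w} : Set P)) := by
  obtain ⟨d, hd, hkey, hchk⟩ := tbl12 (enc w) hw
  refine solvable_of_checks x0 (m 0 5 1 2 3 4) w d.2.1 d.2.2 ?_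
  have e1 : enc x0 = x0c := by decide
  have e2 : enc (m 0 5 1 2 3 4) = c12 := by decide
  rw [e1, e2]
  exact hchk

theorem caseY13 (w : P) (hw : enc w ∈ L15C) :
    IsSolvable (Subgroup.closure ({x0, m 0 5 1 3 2 4, w} : Set P)) := by
  obtain ⟨d, hd, hkey, hchk⟩ := tbl13 (enc w) hw
  refine solvable_of_checks x0 (m 0 5 1 3 2 4) w d.2.1 d.2.2 ?_
  have e1 : enc x0 = x0c := by decide
  have e2 : enc (m 0 5 1 3 2 4) = c13 := by decide
  rw [e1, e2]
  exact hchk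

theorem caseY14 (w : P) (hw : enc w ∈ L15C) :
    IsSolvable (Subgroup.closure ({x0, m 0 5 1 4 2 3, w} : Set P)) := by
  obtain ⟨d, hd, hkey, hchk⟩ := tbl14 (enc w) hw
  refine solvable_of_checks x0 (m 0 5 1 4 2 3) w d.2.1 d.2.2 ?_
  have e1 : enc x0 = x0c := by decide
  have e2 : enc (m 0 5 1 4 2 3) = c14 := by decide
  rw [e1, e2]
  exact hchk

end TTT

open TTT in
/-- **Table 1, `G0 ≅ A₆`, triple transposition entry.** Any three permutations of
6 points of cycle type `2³` generate a solvable group. -/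
theorem isSolvable_closure_of_three_triple_transpositions
    (x y z : Equiv.Perm (Fin 6))
    (hx : x.cycleType = {2, 2, 2}) (hy : y.cycleType = {2, 2, 2})
    (hz : z.cycleType = {2, 2, 2}) :
    IsSolvable (Subgroup.closure {x, y, z}) := by
  have hy2 := ct_sq hy
  have hz2 := ct_sq hz
  have hyf := ct_fpf hy
  have hzf := ct_fpf hz
  have hconj : IsConj x0 x := Equiv.Perm.isConj_iff_cycleType_eq.mpr (x0_ct.trans hx.symm)
  obtain ⟨c, hc⟩ := isConj_iff.mp hconj
  set y' : P := c⁻¹ * y * c with hy'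
  set z' : P := c⁻¹ * z * c with hz'
  have hy'2 : y' * y' = 1 := by
    have h1 : y' * y' = c⁻¹ * (y * y) * c := by rw [hy']; group
    rw [h1, hy2]; group
  have hz'2 : z' * z' = 1 := by
    have h1 : z' * z' = c⁻¹ * (z * z) * c := by rw [hz']; group
    rw [h1, hz2]; group
  have hy'f : ∀ i, y' i ≠ i := by
    intro i hi
    have h2 := congrArg c hi
    simp only [hy', Equiv.Perm.mul_apply, Equiv.apply_symm_apply,
      Equiv.Perm.inv_def, Equiv.symm_apply_apply] at h2
    exact hyf (c i) h2
  have hz'f : ∀ i, z' i ≠ i := by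
    intro i hi
    have h2 := congrArg c hi
    simp only [hz', Equiv.Perm.mul_apply, Equiv.apply_symm_apply,
      Equiv.Perm.inv_def, Equiv.symm_apply_apply] at h2
    exact hzf (c i) h2
  have hyL : y' ∈ L15 := key_perm y' hy'2 hy'f
  have hzL : z' ∈ L15 := key_perm z' hz'2 hz'f
  have hzC : enc z' ∈ L15C := List.mem_map_of_mem (f := enc) hzL
  have htrans : IsSolvable (Subgroup.closure ({x0, y', z'} : Set P)) →
      IsSolvable (Subgroup.closure ({x, y, z} : Set (Equiv.Perm (Fin 6)))) := by
    intro hs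
    have i1 : (MulAut.conj c) x0 = x := by rw [MulAut.conj_apply]; exact hc
    have i2 : (MulAut.conj c) y' = y := by rw [MulAut.conj_apply, hy']; group
    have i3 : (MulAut.conj c) z' = z := by rw [MulAut.conj_apply, hz']; group
    have himg : Subgroup.map (MulAut.conj c).toMonoidHom
        (Subgroup.closure ({x0, y', z'} : Set P)) =
        Subgroup.closure ({x, y, z} : Set (Equiv.Perm (Fin 6))) := by
      rw [MonoidHom.map_closure]
      congr 1
      simp only [MulEquiv.coe_toMonoidHom, Set.image_insert_eq, Set.image_singleton, i1, i2, i3]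
    haveI : Group.IsSolvable (Subgroup.closure ({x0, y', z'} : Set P)) := hs
    have e := Subgroup.equivMapOfInjective (Subgroup.closure ({x0, y', z'} : Set P))
      (MulAut.conj c).toMonoidHom (MulEquiv.injective _)
    rw [himg] at e
    exact solvable_of_solvable_injective (f := e.symm.toMonoidHom) (by exact MulEquiv.injective e.symm)
  apply htrans
  have hdisj : y' = m 0 1 2 3 4 5 ∨ y' = m 0 1 2 4 3 5 ∨ y' = m 0 1 2 5 3 4 ∨ y' = m 0 2 1 3 4 5 ∨
      y' = m 0 2 1 4 3 5 ∨ y' = m 0 2 1 5 3 4 ∨ y' = m 0 3 1 2 4 5 ∨ y' = m 0 3 1 4 2 5 ∨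
      y' = m 0 3 1 5 2 4 ∨ y' = m 0 4 1 2 3 5 ∨ y' = m 0 4 1 3 2 5 ∨ y' = m 0 4 1 5 2 3 ∨
      y' = m 0 5 1 2 3 4 ∨ y' = m 0 5 1 3 2 4 ∨ y' = m 0 5 1 4 2 3 := by
    simpa [L15] using hyL
  rcases hdisj with hyi|hyi|hyi|hyi|hyi|hyi|hyi|hyi|hyi|hyi|hyi|hyi|hyi|hyi|hyi
  · rw [hyi]; exact caseY0 z' hzC
  · rw [hyi]; exact caseY1 z' hzC
  · rw [hyi]; exact caseY2 z' hzC
  · rw [hyi]; exact caseY3 z' hzC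
  · rw [hyi]; exact caseY4 z' hzC
  · rw [hyi]; exact caseY5 z' hzC
  · rw [hyi]; exact caseY6 z' hzC
  · rw [hyi]; exact caseY7 z' hzC
  · rw [hyi]; exact caseY8 z' hzC
  · rw [hyi]; exact caseY9 z' hzC
  · rw [hyi]; exact caseY10 z' hzC
  · rw [hyi]; exact caseY11 z' hzC
  · rw [hyi]; exact caseY12 z' hzC
  · rw [hyi]; exact caseY13 z' hzC
  · rw [hyi]; exact caseY14 z' hzC
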